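/- arXiv:1409.4455 — 5 statements merged into one kernel-verified Lean document; each statement's English description precedes it below -/
import Mathlib

section
/- Fix k ∈ ℕ, μ₀ ∈ ℝ and μ ∈ ℝⁿ. For each m ∈ ℕ, let σ_k(μ₁,…,μₙ, μ₀/m,…,μ₀/m) denote the k-th elementary symmetric polynomial in n+m variables evaluated at the n coordinates of μ together with m copies of μ₀/m. Then σ_k(μ₁,…,μₙ, μ₀/m,…,μ₀/m) tends to σ_k^∞(μ₀;μ) as m → ∞. -/
/-- The `m`-th elementary symmetric polynomial in the `n` variables `μ 0, …, μ (n-1)`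
(with `σ₀ = 1` and `σ_m = 0` for `m > n`). -/
noncomputable def esymm {n : ℕ} (μ : Fin n → ℝ) (m : ℕ) : ℝ :=
  ∑ s ∈ Finset.powersetCard m (Finset.univ : Finset (Fin n)), ∏ i ∈ s, μ i

/-- The `k`-th weighted elementary symmetric polynomial
`σ_k^∞(μ₀;μ) = ∑_{j=0}^k (μ₀^j/j!) σ_{k-j}(μ)`. -/
noncomputable def sigmaInf {n : ℕ} (μ₀ : ℝ) (μ : Fin n → ℝ) (k : ℕ) : ℝ :=
  ∑ j ∈ Finset.range (k + 1), μ₀ ^ j / (Nat.factorial j : ℝ) * esymm μ (k - j)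

open Multiset in
lemma mesymm_zero (s : Multiset ℝ) : s.esymm 0 = 1 := by
  simp [Multiset.esymm, Multiset.powersetCard_zero_left]

lemma mesymm_cons (a : ℝ) (s : Multiset ℝ) (k : ℕ) :
    (a ::ₘ s).esymm (k + 1) = s.esymm (k + 1) + a * s.esymm k := by
  rw [Multiset.esymm, Multiset.powersetCard_cons, Multiset.map_add, Multiset.sum_add,
    Multiset.map_map]
  congr 1
  rw [Multiset.esymm, ← Multiset.sum_map_mul_left]
  congr 1
  ext t
  simp [Multiset.prod_cons]

lemma mesymm_add (s t : Multiset ℝ) (k : ℕ) :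
    (s + t).esymm k = ∑ j ∈ Finset.range (k + 1), s.esymm (k - j) * t.esymm j := by
  induction t using Multiset.induction generalizing k with
  | empty =>
    rw [Finset.sum_range_succ']
    simp [mesymm_zero, Multiset.esymm, Multiset.powersetCard_zero_right]
  | cons a t ih =>
    have hrw : s + a ::ₘ t = a ::ₘ (s + t) := by
      rw [add_comm, Multiset.cons_add, add_comm]
    rw [hrw]
    cases k with
    | zero => simp [mesymm_zero]
    | succ K =>
      rw [mesymm_cons, ih, ih,
        Finset.sum_range_succ' (fun j => s.esymm (K + 1 - j) * t.esymm j) (K + 1),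
        Finset.sum_range_succ' (fun j => s.esymm (K + 1 - j) * (a ::ₘ t).esymm j) (K + 1)]
      simp only [mesymm_cons, mesymm_zero, Nat.succ_sub_succ, Nat.sub_zero, mul_one, mul_add,
        Finset.sum_add_distrib, Finset.mul_sum]
      ring_nf

lemma mesymm_replicate (m j : ℕ) (c : ℝ) :
    (Multiset.replicate m c).esymm j = (m.choose j : ℝ) * c ^ j := by
  induction m generalizing j with
  | zero =>
    cases j with
    | zero => simp [mesymm_zero]
    | succ j => simp [Multiset.esymm, Multiset.powersetCard_zero_right]
  | succ m ih =>
    cases j with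
    | zero => simp [mesymm_zero]
    | succ j =>
      rw [Multiset.replicate_succ, mesymm_cons, ih, ih, Nat.choose_succ_succ]
      push_cast
      ring

lemma esymm_eq_mesymm {n : ℕ} (μ : Fin n → ℝ) (k : ℕ) :
    esymm μ k = (Multiset.map μ (Finset.univ : Finset (Fin n)).val).esymm k :=
  (Finset.esymm_map_val μ Finset.univ k).symm

lemma append_univ_val {n m : ℕ} (μ : Fin n → ℝ) (ν : Fin m → ℝ) :
    Multiset.map (Fin.append μ ν) (Finset.univ : Finset (Fin (n + m))).val =
      Multiset.map μ (Finset.univ : Finset (Fin n)).val +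
        Multiset.map ν (Finset.univ : Finset (Fin m)).val := by
  have h : (Finset.univ : Finset (Fin (n + m))) =
      (Finset.univ : Finset (Fin n ⊕ Fin m)).map finSumFinEquiv.toEmbedding :=
    (Finset.map_univ_equiv finSumFinEquiv).symm
  rw [h, Finset.map_val, Multiset.map_map, ← Finset.univ_disjSum_univ, Finset.val_disjSum, Multiset.disjSum,
    Multiset.map_add, Multiset.map_map, Multiset.map_map]
  congr 1 <;> apply Multiset.map_congr rfl <;> intro x _ <;> simp

lemma esymm_append {n m : ℕ} (μ : Fin n → ℝ) (c : ℝ) (k : ℕ) :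
    esymm (Fin.append μ (fun _ : Fin m => c)) k =
      ∑ j ∈ Finset.range (k + 1), esymm μ (k - j) * ((m.choose j : ℝ) * c ^ j) := by
  rw [esymm_eq_mesymm, append_univ_val, mesymm_add]
  refine Finset.sum_congr rfl fun j _ => ?_
  rw [esymm_eq_mesymm]
  congr 1
  have : Multiset.map (fun _ : Fin m => c) (Finset.univ : Finset (Fin m)).val =
      Multiset.replicate m c := by
    rw [Multiset.map_const']
    simp
  rw [this, mesymm_replicate]

lemma choose_div_tendsto (j : ℕ) (μ₀ : ℝ) :
    Filter.Tendsto (fun m : ℕ => (m.choose j : ℝ) * (μ₀ / m) ^ j) Filter.atTop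
      (nhds (μ₀ ^ j / (Nat.factorial j : ℝ))) := by
  have key : ∀ m : ℕ, j ≤ m → 1 ≤ m →
      (m.choose j : ℝ) * (μ₀ / m) ^ j =
        (∏ i ∈ Finset.range j, (1 - (i : ℝ) / m)) * (μ₀ ^ j / (Nat.factorial j : ℝ)) := by
    intro m hjm h1m
    have hm : (m : ℝ) ≠ 0 := by positivity
    have hchoose : (m.choose j : ℝ) = (∏ i ∈ Finset.range j, ((m : ℝ) - i)) /
        (Nat.factorial j : ℝ) := by
      have := Nat.descFactorial_eq_factorial_mul_choose m j
      have h2 : (m.descFactorial j : ℝ) = ∏ i ∈ Finset.range j, ((m : ℝ) - i) := by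
        rw [Nat.descFactorial_eq_prod_range]
        push_cast [Finset.prod_natCast]
        refine Finset.prod_congr rfl fun i hi => ?_
        have : i ≤ m := le_trans (Finset.mem_range.mp hi).le hjm
        push_cast [Nat.cast_sub this]
        ring
      have h3 : (m.descFactorial j : ℝ) = (Nat.factorial j : ℝ) * (m.choose j : ℝ) := by
        rw [this]; push_cast; ring
      rw [h2] at h3
      field_simp at h3 ⊢
      linarith [h3]
    rw [hchoose, div_pow, Finset.prod_congr rfl
      (fun i (_ : i ∈ Finset.range j) => (by field_simp : 1 - (i : ℝ) / m = ((m : ℝ) - i) / m))]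
    rw [Finset.prod_div_distrib, Finset.prod_const]
    have : (Finset.range j).card = j := Finset.card_range j
    rw [this]
    ring
  have hlim : Filter.Tendsto
      (fun m : ℕ => (∏ i ∈ Finset.range j, (1 - (i : ℝ) / m)) * (μ₀ ^ j / (Nat.factorial j : ℝ)))
      Filter.atTop (nhds (μ₀ ^ j / (Nat.factorial j : ℝ))) := by
    have : Filter.Tendsto (fun m : ℕ => ∏ i ∈ Finset.range j, (1 - (i : ℝ) / m))
        Filter.atTop (nhds (∏ i ∈ Finset.range j, (1 : ℝ))) := by
      refine tendsto_finset_prod _ fun i _ => ?_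
      have := tendsto_const_div_atTop_nhds_zero_nat (i : ℝ)
      simpa using tendsto_const_nhds.sub this
    simpa using this.mul_const _
  refine hlim.congr' ?_
  filter_upwards [Filter.eventually_ge_atTop j, Filter.eventually_ge_atTop 1] with m hj h1
  exact (key m hj h1).symm

/-- The `k`-th elementary symmetric polynomial of the `n` coordinates of `μ` together with
`m` copies of `μ₀ / m` tends to `σ_k^∞(μ₀;μ)` as `m → ∞`. -/
theorem weighted_esymm_limit {n : ℕ} (k : ℕ) (μ₀ : ℝ) (μ : Fin n → ℝ) :
    Filter.Tendsto
      (fun m : ℕ => esymm (Fin.append μ (fun _ : Fin m => μ₀ / (m : ℝ))) k)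
      Filter.atTop (nhds (sigmaInf μ₀ μ k)) := by
  have heq : ∀ m : ℕ, esymm (Fin.append μ (fun _ : Fin m => μ₀ / (m : ℝ))) k =
      ∑ j ∈ Finset.range (k + 1), esymm μ (k - j) * ((m.choose j : ℝ) * (μ₀ / m) ^ j) :=
    fun m => esymm_append μ (μ₀ / m) k
  simp only [heq, sigmaInf]
  refine tendsto_finset_sum _ fun j _ => ?_
  have := (choose_div_tendsto j μ₀).const_mul (esymm μ (k - j))
  simpa [mul_comm, mul_div_assoc] using this
end

section
/- (Weighted Newton inequality) For every integer k ≥ 1, every μ₀ ∈ ℝ and every μ ∈ ℝⁿ, one has σ_{k−1}^∞(μ₀;μ)·σ_{k+1}^∞(μ₀;μ) ≤ (k/(k+1))·(σ_k^∞(μ₀;μ))². -/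
open Polynomial Multiset Filter

section WeightedNewtonAux

lemma natDeg_deriv (p : ℝ[X]) (hp : p.natDegree ≠ 0) :
    (derivative p).natDegree = p.natDegree - 1 := by
  refine le_antisymm (natDegree_derivative_le p) (le_natDegree_of_ne_zero ?_)
  rw [coeff_derivative]
  have h1 : p.natDegree - 1 + 1 = p.natDegree := Nat.succ_pred_eq_of_pos (Nat.pos_of_ne_zero hp)
  rw [h1]
  have hp0 : p ≠ 0 := fun h => hp (by simp [h])
  have hc : p.coeff p.natDegree ≠ 0 := by
    rw [← leadingCoeff]; exact leadingCoeff_ne_zero.mpr hp0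
  have : ((p.natDegree - 1 : ℕ) : ℝ) + 1 ≠ 0 := by positivity
  exact mul_ne_zero hc this

lemma chain (p : ℝ[X]) (h : Multiset.card p.roots = p.natDegree) (d : ℕ)
    (hd : d ≤ p.natDegree) :
    (derivative^[d] p).natDegree = p.natDegree - d ∧
    Multiset.card (derivative^[d] p).roots = p.natDegree - d := by
  induction d with
  | zero => exact ⟨by simp, by simpa using h⟩
  | succ d ih =>
    obtain ⟨h1, h2⟩ := ih (Nat.le_of_succ_le hd)
    have hq : (derivative^[d] p).natDegree ≠ 0 := by omega
    rw [Function.iterate_succ_apply']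
    have hdeg : (derivative (derivative^[d] p)).natDegree = p.natDegree - d - 1 := by
      rw [natDeg_deriv _ hq, h1]
    refine ⟨by omega, ?_⟩
    have hle := (derivative (derivative^[d] p)).card_roots'
    have hge := (derivative^[d] p).card_roots_le_derivative
    omega

lemma disc (q : ℝ[X]) (h2 : q.natDegree ≤ 2)
    (hroot : q.coeff 2 ≠ 0 → ∃ x, q.IsRoot x) :
    4 * (q.coeff 2 * q.coeff 0) ≤ q.coeff 1 ^ 2 := by
  by_cases ha : q.coeff 2 = 0
  · rw [ha]; simp; positivity
  · obtain ⟨x, hx⟩ := hroot ha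
    have heval : q.eval x = q.coeff 0 + q.coeff 1 * x + q.coeff 2 * x ^ 2 := by
      rw [eval_eq_sum_range' (show q.natDegree < 3 by omega)]
      rw [Finset.sum_range_succ, Finset.sum_range_succ, Finset.sum_range_succ]
      simp only [Finset.range_zero, Finset.sum_empty, pow_zero, pow_one, zero_add, mul_one]
    rw [Polynomial.IsRoot, heval] at hx
    have key : q.coeff 1 ^ 2 - 4 * (q.coeff 2 * q.coeff 0) =
        (2 * q.coeff 2 * x + q.coeff 1) ^ 2
          - 4 * q.coeff 2 * (q.coeff 0 + q.coeff 1 * x + q.coeff 2 * x ^ 2) := by ring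
    rw [hx] at key
    nlinarith [sq_nonneg (2 * q.coeff 2 * x + q.coeff 1)]

lemma rev_X_sub_C (r : ℝ) : (X - C r).reverse = 1 - C r * X := by
  ext n
  rw [Polynomial.reverse, coeff_reflect, natDegree_X_sub_C]
  match n with
  | 0 => simp [revAt_le]
  | 1 => simp [revAt_le, coeff_one]
  | (n+2) =>
    rw [revAt_eq_self_of_lt (by omega)]
    simp [coeff_X, coeff_C, coeff_one]

lemma rev_prod (R : Multiset ℝ) :
    (R.map fun r => X - C r).prod.reverse = (R.map fun r => 1 - C r * X).prod := by
  induction R using Multiset.induction with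
  | empty => simpa using reverse_C (1:ℝ)
  | cons a R ih =>
    rw [Multiset.map_cons, Multiset.map_cons, Multiset.prod_cons, Multiset.prod_cons,
      reverse_mul_of_domain, rev_X_sub_C, ih]
section
variable (k m : ℕ)

lemma natfact (hk : 1 ≤ k) (hm : k + 1 ≤ m) :
    (k+1) * ((k.descFactorial (k-1))^2 * ((m-k).descFactorial (m-(k+1)))^2)
      ≤ k * (4 * ((k+1).descFactorial (k-1) * ((k-1).descFactorial (k-1)
          * ((m-(k+1)).descFactorial (m-(k+1)) * (m-(k-1)).descFactorial (m-(k+1)))))) := by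
  obtain ⟨j, rfl⟩ : ∃ j, k = j + 1 := ⟨k - 1, by omega⟩
  obtain ⟨i, rfl⟩ : ∃ i, m = j + 2 + i := ⟨m - (j + 2), by omega⟩
  have E1 : j + 1 - 1 = j := by omega
  have E2 : j + 1 + 1 = j + 2 := by omega
  have E3 : j + 2 + i - (j + 1) = i + 1 := by omega
  have E4 : j + 2 + i - (j + 1 + 1) = i := by omega
  have E5 : j + 2 + i - (j + 1 - 1) = i + 2 := by omega
  rw [E5, E1, E2, E3, E4]
  set A := (j+1).descFactorial j with hA0
  set B := (i+1).descFactorial i with hB0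
  set C := (j+2).descFactorial j with hC0
  set D := j.descFactorial j with hD0
  set E := i.descFactorial i with hE0
  set F := (i+2).descFactorial i with hF0
  have hA : A = (j+1) * D := by
    have := Nat.succ_descFactorial j j
    simpa [show j + 1 - j = 1 by omega] using this
  have hB : B = (i+1) * E := by
    have := Nat.succ_descFactorial i i
    simpa [show i + 1 - i = 1 by omega] using this
  have h2C : 2 * C = (j+2) * A := by
    have := Nat.succ_descFactorial (j+1) j
    simpa [show j + 1 + 1 - j = 2 by omega, show j+1+1 = j+2 by omega] using this
  have h2F : 2 * F = (i+2) * B := by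
    have := Nat.succ_descFactorial (i+1) i
    simpa [show i + 1 + 1 - i = 2 by omega, show i+1+1 = i+2 by omega] using this
  calc (j+2) * (A^2 * B^2)
      = (j+2) * (A * B) * (((j+1)*D) * ((i+1)*E)) := by rw [← hA, ← hB]; ring
    _ ≤ (j+2) * (A * B) * (((j+1)*D) * ((i+2)*E)) := by
        exact Nat.mul_le_mul le_rfl (Nat.mul_le_mul le_rfl (Nat.mul_le_mul (by omega) le_rfl))
    _ = (j+1) * (D * E) * (((j+2)*A) * ((i+2)*B)) := by ring
    _ = (j+1) * (D * E) * ((2*C) * (2*F)) := by rw [h2C, h2F]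
    _ = (j+1) * (4 * (C * (D * (E * F)))) := by ring
end
lemma newton_multiset (S : Multiset ℝ) (k : ℕ) (hk : 1 ≤ k) :
    S.esymm (k-1) * S.esymm (k+1) ≤ (k:ℝ)/((k:ℝ)+1) * S.esymm k ^ 2 := by
  have hk1 : (0:ℝ) < (k:ℝ) + 1 := by positivity
  by_cases hmle : Multiset.card S ≤ k
  · have h0 : S.esymm (k+1) = 0 := by
      rw [Multiset.esymm, Multiset.powersetCard_eq_empty _ (by omega)]
      simp
    rw [h0, mul_zero]
    positivity
  push_neg at hmle
  have hm' : k + 1 ≤ Multiset.card S := hmle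
  set p := (S.map fun r => X - C r).prod with hp
  have hpdeg : p.natDegree = Multiset.card S := natDegree_multiset_prod_X_sub_C_eq_card S
  have hcard : Multiset.card p.roots = p.natDegree := by
    rw [hp, roots_multiset_prod_X_sub_C, hpdeg]
  set s := derivative^[Multiset.card S - (k+1)] p with hs
  obtain ⟨hsdeg0, hscard0⟩ := chain p hcard (Multiset.card S - (k+1)) (by omega)
  rw [hpdeg] at hsdeg0 hscard0
  have hsdeg : s.natDegree = k + 1 := by rw [← hs] at hsdeg0; omega
  have hscard : Multiset.card s.roots = k + 1 := by rw [← hs] at hscard0; omega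
  have hsne : s ≠ 0 := by
    intro h
    rw [h, natDegree_zero] at hsdeg
    omega
  have hs0 : s.coeff 0 = ((Multiset.card S - (k+1)).descFactorial (Multiset.card S - (k+1)) : ℝ)
      * ((-1)^(k+1) * S.esymm (k+1)) := by
    rw [hs, coeff_iterate_derivative, zero_add, nsmul_eq_mul, hp,
      Multiset.prod_X_sub_C_coeff S (by omega : Multiset.card S - (k+1) ≤ Multiset.card S),
      show Multiset.card S - (Multiset.card S - (k+1)) = k + 1 by omega]
  have hs1 : s.coeff 1 = ((Multiset.card S - k).descFactorial (Multiset.card S - (k+1)) : ℝ)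
      * ((-1)^k * S.esymm k) := by
    rw [hs, coeff_iterate_derivative,
      show 1 + (Multiset.card S - (k+1)) = Multiset.card S - k by omega, nsmul_eq_mul, hp,
      Multiset.prod_X_sub_C_coeff S (by omega : Multiset.card S - k ≤ Multiset.card S),
      show Multiset.card S - (Multiset.card S - k) = k by omega]
  have hs2 : s.coeff 2 = ((Multiset.card S - (k-1)).descFactorial (Multiset.card S - (k+1)) : ℝ)
      * ((-1)^(k-1) * S.esymm (k-1)) := by
    rw [hs, coeff_iterate_derivative,
      show 2 + (Multiset.card S - (k+1)) = Multiset.card S - (k-1) by omega, nsmul_eq_mul, hp,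
      Multiset.prod_X_sub_C_coeff S (by omega : Multiset.card S - (k-1) ≤ Multiset.card S),
      show Multiset.card S - (Multiset.card S - (k-1)) = k - 1 by omega]
  set u := s.reverse with hu
  have hucoeff : ∀ j, j ≤ k+1 → u.coeff j = s.coeff (k+1-j) := by
    intro j hj
    rw [hu, coeff_reverse, hsdeg, revAt_le hj]
  have hudeg : u.natDegree ≤ k+1 := hsdeg ▸ s.reverse_natDegree_le
  set v := derivative^[k-1] u with hv
  have hvdeg : v.natDegree ≤ 2 := by
    have hnd := natDegree_iterate_derivative u (k-1)
    rw [← hv] at hnd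
    omega
  have hv0 : v.coeff 0 = ((k-1).descFactorial (k-1) : ℝ) * s.coeff 2 := by
    rw [hv, coeff_iterate_derivative, zero_add, nsmul_eq_mul,
      hucoeff (k-1) (by omega), show k+1-(k-1) = 2 by omega]
  have hv1 : v.coeff 1 = (k.descFactorial (k-1) : ℝ) * s.coeff 1 := by
    rw [hv, coeff_iterate_derivative, show 1 + (k-1) = k by omega, nsmul_eq_mul,
      hucoeff k (by omega), show k+1-k = 1 by omega]
  have hv2 : v.coeff 2 = ((k+1).descFactorial (k-1) : ℝ) * s.coeff 0 := by
    rw [hv, coeff_iterate_derivative, show 2 + (k-1) = k+1 by omega, nsmul_eq_mul,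
      hucoeff (k+1) le_rfl, show k+1-(k+1) = 0 by omega]
  have hroot : v.coeff 2 ≠ 0 → ∃ x, v.IsRoot x := by
    intro h2
    have hs0ne : s.coeff 0 ≠ 0 := by
      intro h
      rw [hv2, h, mul_zero] at h2
      exact h2 rfl
    have h0mem : (0:ℝ) ∉ s.roots := by
      intro hmem
      have hisr := (mem_roots hsne).mp hmem
      rw [Polynomial.IsRoot, ← coeff_zero_eq_eval_zero] at hisr
      exact hs0ne hisr
    have hueq : u = C s.leadingCoeff * (s.roots.map fun r => 1 - C r * X).prod := by
      conv_lhs => rw [hu, ← C_leadingCoeff_mul_prod_multiset_X_sub_C (hscard.trans hsdeg.symm)]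
      rw [reverse_mul_of_domain, reverse_C, rev_prod]
    have hAne : s.leadingCoeff ≠ 0 := leadingCoeff_ne_zero.mpr hsne
    have hne0 : (0:ℝ[X]) ∉ (s.roots.map fun r => 1 - C r * X) := by
      intro hmem
      obtain ⟨r, _, hr⟩ := Multiset.mem_map.mp hmem
      have hco : ((1:ℝ[X]) - C r * X).coeff 0 = 1 := by simp
      rw [hr] at hco
      simp at hco
    have hucard : Multiset.card u.roots = k + 1 := by
      rw [hueq, roots_C_mul _ hAne, roots_multiset_prod _ hne0, Multiset.card_bind,
        Multiset.map_map]
      have hmapeq : Multiset.map ((Multiset.card ∘ Polynomial.roots) ∘ fun r => 1 - C r * X)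
          s.roots = Multiset.map (fun _ => (1:ℕ)) s.roots := by
        refine Multiset.map_congr rfl ?_
        intro r hrmem
        have hrne : r ≠ 0 := fun h => h0mem (h ▸ hrmem)
        have hfac : (1:ℝ[X]) - C r * X = C (-r) * (X - C r⁻¹) := by
          rw [mul_sub, ← C_mul, neg_mul, mul_inv_cancel₀ hrne, map_neg, map_neg, map_one]
          ring
        simp only [Function.comp_apply]
        rw [hfac, roots_C_mul _ (neg_ne_zero.mpr hrne), roots_X_sub_C]
        simp
      rw [hmapeq, Multiset.map_const', Multiset.sum_replicate, smul_eq_mul, mul_one, hscard]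
    have hudeg' : Multiset.card u.roots = u.natDegree := by
      have := u.card_roots'
      omega
    obtain ⟨_, hvcard⟩ := chain u hudeg' (k-1) (by omega)
    have hpos : 0 < Multiset.card v.roots := by
      rw [← hv] at hvcard
      omega
    obtain ⟨x, hx⟩ := Multiset.card_pos_iff_exists_mem.mp hpos
    exact ⟨x, (Polynomial.mem_roots'.mp hx).2⟩
  have hdisc := disc v hvdeg hroot
  rw [hv0, hv1, hv2] at hdisc
  have hw : ((-1:ℝ))^(k+1) = (-1)^(k-1) := by
    rw [show k+1 = (k-1)+2 by omega, pow_add]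
    norm_num
  have hw2 : ((-1:ℝ))^(k-1) * (-1)^(k-1) = 1 := by
    rw [← pow_add, ← two_mul, pow_mul]
    norm_num
  have hsign2 : ((-1:ℝ))^k * (-1)^k = 1 := by
    rw [← pow_add, ← two_mul, pow_mul]
    norm_num
  have hprod02 : s.coeff 0 * s.coeff 2
      = ((Multiset.card S - (k+1)).descFactorial (Multiset.card S - (k+1)) : ℝ)
        * ((Multiset.card S - (k-1)).descFactorial (Multiset.card S - (k+1)) : ℝ)
        * (S.esymm (k-1) * S.esymm (k+1)) := by
    rw [hs0, hs2, hw]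
    linear_combination (((Multiset.card S - (k+1)).descFactorial (Multiset.card S - (k+1)) : ℝ)
        * ((Multiset.card S - (k-1)).descFactorial (Multiset.card S - (k+1)) : ℝ)
        * (S.esymm (k-1) * S.esymm (k+1))) * hw2
  have hsq1 : s.coeff 1 ^ 2
      = ((Multiset.card S - k).descFactorial (Multiset.card S - (k+1)) : ℝ)^2
        * S.esymm k ^ 2 := by
    rw [hs1]
    linear_combination (((Multiset.card S - k).descFactorial (Multiset.card S - (k+1)) : ℝ)^2
        * S.esymm k ^ 2) * hsign2
  have hdisc2 : 4 * ((k+1).descFactorial (k-1) : ℝ) * ((k-1).descFactorial (k-1) : ℝ)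
        * (s.coeff 0 * s.coeff 2)
      ≤ (k.descFactorial (k-1) : ℝ)^2 * s.coeff 1 ^ 2 := by
    calc 4 * ((k+1).descFactorial (k-1) : ℝ) * ((k-1).descFactorial (k-1) : ℝ)
          * (s.coeff 0 * s.coeff 2)
        = 4 * (((k+1).descFactorial (k-1) : ℝ) * s.coeff 0
            * (((k-1).descFactorial (k-1) : ℝ) * s.coeff 2)) := by ring
      _ ≤ ((k.descFactorial (k-1) : ℝ) * s.coeff 1) ^ 2 := hdisc
      _ = (k.descFactorial (k-1) : ℝ)^2 * s.coeff 1 ^ 2 := by ring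
  rw [hprod02, hsq1] at hdisc2
  have hNat := natfact k (Multiset.card S) hk hm'
  have hNatR := (Nat.cast_le (α := ℝ)).mpr hNat
  push_cast at hNatR
  have hF2 : 0 < (k+1).descFactorial (k-1) := by
    exact Nat.pos_of_ne_zero (fun h => by
      have := Nat.descFactorial_eq_zero_iff_lt.mp h
      omega)
  have hF0 : 0 < (k-1).descFactorial (k-1) := by
    exact Nat.pos_of_ne_zero (fun h => by
      have := Nat.descFactorial_eq_zero_iff_lt.mp h
      omega)
  have hD0 : 0 < (Multiset.card S - (k+1)).descFactorial (Multiset.card S - (k+1)) := by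
    exact Nat.pos_of_ne_zero (fun h => by
      have := Nat.descFactorial_eq_zero_iff_lt.mp h
      omega)
  have hD2 : 0 < (Multiset.card S - (k-1)).descFactorial (Multiset.card S - (k+1)) := by
    exact Nat.pos_of_ne_zero (fun h => by
      have := Nat.descFactorial_eq_zero_iff_lt.mp h
      omega)
  have hCL : (0:ℝ) < 4 * ((k+1).descFactorial (k-1) : ℝ) * ((k-1).descFactorial (k-1) : ℝ)
      * (((Multiset.card S - (k+1)).descFactorial (Multiset.card S - (k+1)) : ℝ)
        * ((Multiset.card S - (k-1)).descFactorial (Multiset.card S - (k+1)) : ℝ)) := by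
    have c1 : (0:ℝ) < ((k+1).descFactorial (k-1) : ℝ) := by exact_mod_cast hF2
    have c2 : (0:ℝ) < ((k-1).descFactorial (k-1) : ℝ) := by exact_mod_cast hF0
    have c3 : (0:ℝ) < ((Multiset.card S - (k+1)).descFactorial (Multiset.card S - (k+1)) : ℝ) := by
      exact_mod_cast hD0
    have c4 : (0:ℝ) < ((Multiset.card S - (k-1)).descFactorial (Multiset.card S - (k+1)) : ℝ) := by
      exact_mod_cast hD2
    positivity
  rw [div_mul_eq_mul_div, le_div_iff₀ hk1]
  have h1 := mul_le_mul_of_nonneg_left hdisc2 hk1.le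
  have h2 := mul_le_mul_of_nonneg_right hNatR (sq_nonneg (S.esymm k))
  have h3 : (4 * ((k+1).descFactorial (k-1) : ℝ) * ((k-1).descFactorial (k-1) : ℝ)
        * (((Multiset.card S - (k+1)).descFactorial (Multiset.card S - (k+1)) : ℝ)
          * ((Multiset.card S - (k-1)).descFactorial (Multiset.card S - (k+1)) : ℝ)))
        * (S.esymm (k-1) * S.esymm (k+1) * ((k:ℝ)+1))
      ≤ (4 * ((k+1).descFactorial (k-1) : ℝ) * ((k-1).descFactorial (k-1) : ℝ)
        * (((Multiset.card S - (k+1)).descFactorial (Multiset.card S - (k+1)) : ℝ)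
          * ((Multiset.card S - (k-1)).descFactorial (Multiset.card S - (k+1)) : ℝ)))
        * ((k:ℝ) * S.esymm k ^ 2) := by
    linarith [h1, h2]
  exact le_of_mul_le_mul_left h3 hCL
lemma esymm_cons (a : ℝ) (S : Multiset ℝ) (n : ℕ) :
    (a ::ₘ S).esymm (n+1) = S.esymm (n+1) + a * S.esymm n := by
  rw [Multiset.esymm, Multiset.powersetCard_cons, Multiset.map_add, Multiset.sum_add,
    Multiset.map_map]
  congr 1
  rw [Multiset.esymm, ← Multiset.sum_map_mul_left]
  refine congrArg Multiset.sum (Multiset.map_congr rfl ?_)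
  intro t ht
  simp [Multiset.prod_cons]

lemma esymm_add_rep (A : Multiset ℝ) (c : ℝ) : ∀ N j, (A + Multiset.replicate N c).esymm j
    = ∑ i ∈ Finset.range (j+1), (N.choose i : ℝ) * c^i * A.esymm (j-i) := by
  intro N
  induction N with
  | zero =>
    intro j
    rw [Multiset.replicate_zero, add_zero]
    symm
    rw [Finset.sum_eq_single_of_mem 0 (Finset.mem_range.mpr (by omega))]
    · simp
    · intro b _ hb
      obtain ⟨b', rfl⟩ : ∃ b', b = b' + 1 := ⟨b - 1, by omega⟩
      simp
  | succ N ih =>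
    intro j
    have hrep : A + Multiset.replicate (N+1) c = c ::ₘ (A + Multiset.replicate N c) := by
      rw [Multiset.replicate_succ, Multiset.add_cons]
    rw [hrep]
    cases j with
    | zero => simp [Multiset.esymm, Multiset.powersetCard_zero_left]
    | succ j =>
      rw [esymm_cons, ih (j+1), ih j, Finset.mul_sum,
        Finset.sum_range_succ' (fun i => ((N.choose i : ℝ)) * c^i * A.esymm (j+1-i)) (j+1),
        Finset.sum_range_succ' (fun i => (((N+1).choose i : ℝ)) * c^i * A.esymm (j+1-i)) (j+1),
        add_right_comm, ← Finset.sum_add_distrib]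
      congr 1
      · refine Finset.sum_congr rfl ?_
        intro i _
        rw [Nat.choose_succ_succ]
        have hsub : j + 1 - (i + 1) = j - i := by omega
        rw [hsub]
        push_cast
        ring
      · simp

lemma tendsto_aux (i : ℕ) :
    Tendsto (fun N : ℕ => (N.choose i : ℝ) / (N:ℝ)^i) atTop
      (nhds (1/(Nat.factorial i : ℝ))) := by
  have h1 : Tendsto (fun N : ℕ => (∏ t ∈ Finset.range i, (1 - (t:ℝ)/(N:ℝ))) /
      (Nat.factorial i : ℝ)) atTop (nhds (1/(Nat.factorial i : ℝ))) := by
    apply Tendsto.div_const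
    have h2 : Tendsto (fun N : ℕ => ∏ t ∈ Finset.range i, (1 - (t:ℝ)/(N:ℝ))) atTop
        (nhds (∏ _t ∈ Finset.range i, (1:ℝ))) := by
      apply tendsto_finset_prod
      intro t _
      have h0 : Tendsto (fun N:ℕ => 1 - (t:ℝ)/(N:ℝ)) atTop (nhds (1 - 0)) :=
        (tendsto_const_div_atTop_nhds_zero_nat (t:ℝ)).const_sub 1
      simpa using h0
    simpa using h2
  refine h1.congr' ?_
  filter_upwards [Filter.eventually_ge_atTop i, Filter.eventually_ge_atTop 1] with N hNi hN1
  have hNne : (N:ℝ) ≠ 0 := by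
    have : (0:ℝ) < N := by exact_mod_cast hN1
    linarith
  have hdesc : (N.descFactorial i : ℝ) = ∏ t ∈ Finset.range i, ((N:ℝ) - t) := by
    rw [Nat.descFactorial_eq_prod_range, Nat.cast_prod]
    refine Finset.prod_congr rfl ?_
    intro t ht
    have : t ≤ N := le_trans (Nat.le_of_lt (Finset.mem_range.mp ht)) hNi
    rw [Nat.cast_sub this]
  have hfacne : ((Nat.factorial i : ℕ) : ℝ) ≠ 0 := by
    exact_mod_cast (Nat.factorial_pos i).ne'
  have hchoose : (N.choose i : ℝ) = (N.descFactorial i : ℝ) / (Nat.factorial i : ℝ) := by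
    have h2 : N.choose i * Nat.factorial i = N.descFactorial i := by
      rw [mul_comm]
      exact (Nat.descFactorial_eq_factorial_mul_choose N i).symm
    field_simp
    exact_mod_cast h2
  have hprod : ∏ t ∈ Finset.range i, (1 - (t:ℝ)/(N:ℝ))
      = (∏ t ∈ Finset.range i, ((N:ℝ) - t)) / (N:ℝ)^i := by
    calc ∏ t ∈ Finset.range i, (1 - (t:ℝ)/(N:ℝ))
        = ∏ t ∈ Finset.range i, (((N:ℝ) - t) / (N:ℝ)) := by
          refine Finset.prod_congr rfl ?_
          intro t _
          field_simp
      _ = (∏ t ∈ Finset.range i, ((N:ℝ) - t)) / (∏ _t ∈ Finset.range i, (N:ℝ)) :=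
          Finset.prod_div_distrib _ _
      _ = (∏ t ∈ Finset.range i, ((N:ℝ) - t)) / (N:ℝ)^i := by
          rw [Finset.prod_const, Finset.card_range]
  rw [hchoose, hdesc, hprod]
  ring


end WeightedNewtonAux

/-- The weighted Newton inequality:
`σ_{k-1}^∞(μ₀;μ) σ_{k+1}^∞(μ₀;μ) ≤ (k/(k+1)) (σ_k^∞(μ₀;μ))²` for all `k ≥ 1`. -/
theorem weighted_newton_inequality {n : ℕ} (k : ℕ) (hk : 1 ≤ k) (μ₀ : ℝ) (μ : Fin n → ℝ) :
    sigmaInf μ₀ μ (k - 1) * sigmaInf μ₀ μ (k + 1)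
      ≤ (k : ℝ) / ((k : ℝ) + 1) * (sigmaInf μ₀ μ k) ^ 2 := by
  set A : Multiset ℝ := Finset.univ.val.map μ with hA
  have hesymm : ∀ j, A.esymm j = esymm μ j := fun j => Finset.esymm_map_val μ Finset.univ j
  set a : ℕ → ℕ → ℝ := fun N j => (A + Multiset.replicate N (μ₀/(N:ℝ))).esymm j with haa
  have ha : ∀ N j, a N j
      = ∑ i ∈ Finset.range (j+1), (N.choose i : ℝ) * (μ₀/(N:ℝ))^i * esymm μ (j-i) := by
    intro N j
    show (A + Multiset.replicate N (μ₀/(N:ℝ))).esymm j = _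
    rw [esymm_add_rep]
    exact Finset.sum_congr rfl fun i _ => by rw [hesymm]
  have hlim : ∀ j, Tendsto (fun N => a N j) atTop (nhds (sigmaInf μ₀ μ j)) := by
    intro j
    have hsig : sigmaInf μ₀ μ j
        = ∑ i ∈ Finset.range (j+1), 1/(Nat.factorial i : ℝ) * μ₀^i * esymm μ (j-i) := by
      rw [sigmaInf]
      exact Finset.sum_congr rfl fun i _ => by ring
    rw [hsig]
    have htt := tendsto_finset_sum (Finset.range (j+1))
      (fun i (_ : i ∈ Finset.range (j+1)) =>
        ((tendsto_aux i).mul_const (μ₀^i)).mul_const (esymm μ (j-i)))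
    refine htt.congr ?_
    intro N
    rw [ha]
    refine Finset.sum_congr rfl ?_
    intro i _
    rw [div_pow]
    ring
  have hineq : ∀ N, a N (k-1) * a N (k+1) ≤ (k:ℝ)/((k:ℝ)+1) * a N k ^ 2 :=
    fun N => newton_multiset _ k hk
  exact le_of_tendsto_of_tendsto' ((hlim (k-1)).mul (hlim (k+1)))
    (((hlim k).pow 2).const_mul _) hineq
end

section
/- For every integer k ≥ 1, every μ₀ ∈ ℝ and every μ ∈ ℝⁿ, equality holds in the weighted Newton inequality σ_{k−1}^∞(μ₀;μ)·σ_{k+1}^∞(μ₀;μ) ≤ (k/(k+1))·(σ_k^∞(μ₀;μ))² if and only if either μ = 0, or μ₀ = 0 and at most k−1 of the coordinates μ₁,…,μₙ are nonzero. -/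
open Polynomial

namespace WNaux

variable {n : ℕ}

local notation "ℝℂ" => algebraMap ℝ ℂ

noncomputable def Pp (μ : Fin n → ℝ) : ℝ[X] := ∏ i, (C (μ i) * X + 1)

lemma esymm_eq_zero {μ : Fin n → ℝ} {m : ℕ}
    (h : (Finset.univ.filter fun i => μ i ≠ 0).card < m) : esymm μ m = 0 := by
  unfold esymm
  apply Finset.sum_eq_zero
  intro s hs
  rw [Finset.mem_powersetCard] at hs
  have hns : ¬ s ⊆ Finset.univ.filter (fun i => μ i ≠ 0) := by
    intro hsub
    have := Finset.card_le_card hsub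
    omega
  obtain ⟨i, hi, hni⟩ := Finset.not_subset.1 hns
  refine Finset.prod_eq_zero hi ?_
  by_contra hne
  exact hni (Finset.mem_filter.2 ⟨Finset.mem_univ _, hne⟩)

lemma esymm_zero_fun (m : ℕ) : esymm (0 : Fin n → ℝ) m = if m = 0 then 1 else 0 := by
  unfold esymm
  rcases Nat.eq_zero_or_pos m with rfl | hm
  · simp
  · rw [if_neg hm.ne']
    apply Finset.sum_eq_zero
    intro s hs
    rw [Finset.mem_powersetCard] at hs
    have : s.Nonempty := by
      rw [← Finset.card_pos, hs.2]; exact hm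
    obtain ⟨i, hi⟩ := this
    exact Finset.prod_eq_zero hi rfl

lemma Pp_factor_ne (a : ℝ) : (C a * X + 1 : ℝ[X]) ≠ 0 := by
  intro h
  have := congrArg (eval 0) h
  simp at this

lemma coeff_Pp (μ : Fin n → ℝ) (m : ℕ) : (Pp μ).coeff m = esymm μ m := by
  unfold Pp
  have hexp := Finset.prod_add (fun i : Fin n => C (μ i) * X) (fun _ => (1:ℝ[X])) Finset.univ
  simp only [Finset.prod_const_one, mul_one] at hexp
  rw [hexp]
  have hterm : ∀ t : Finset (Fin n), (∏ i ∈ t, (C (μ i) * X)) = C (∏ i ∈ t, μ i) * X ^ t.card := by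
    intro t
    rw [Finset.prod_mul_distrib, Finset.prod_const, map_prod]
  rw [finset_sum_coeff]
  simp only [hterm, coeff_C_mul, coeff_X_pow]
  rw [esymm, Finset.powersetCard_eq_filter, Finset.sum_filter]
  refine Finset.sum_congr rfl fun t _ => ?_
  by_cases h : t.card = m
  · simp [h]
  · simp [h, Ne.symm h]

lemma Pp_natDegree (μ : Fin n → ℝ) :
    (Pp μ).natDegree = (Finset.univ.filter fun i => μ i ≠ 0).card := by
  unfold Pp
  rw [natDegree_prod _ _ (fun i _ => Pp_factor_ne _), Finset.card_filter]
  refine Finset.sum_congr rfl fun i _ => ?_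
  by_cases h : μ i = 0
  · simp [h]
  · have : (C (μ i) * X + 1 : ℝ[X]) = C (μ i) * X + C 1 := by rw [map_one]
    rw [this, natDegree_linear h, if_pos h]

lemma Pp_splits (μ : Fin n → ℝ) : (Pp μ).Splits := by
  refine Splits.prod fun i _ => Splits.of_natDegree_le_one ?_
  have : (C (μ i) * X + 1 : ℝ[X]) = C (μ i) * X + C 1 := by rw [map_one]
  rw [this]; exact natDegree_linear_le

lemma Pp_eval_zero (μ : Fin n → ℝ) : (Pp μ).eval 0 = 1 := by
  unfold Pp; rw [eval_prod]; simp

lemma Pp_ne_zero (μ : Fin n → ℝ) : Pp μ ≠ 0 := by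
  intro h
  have := Pp_eval_zero μ
  rw [h] at this; simp at this

/-- lower bound for |Q(z)| in terms of |Im z| for a split polynomial. -/
lemma abs_eval_ge_of_splits {Q : ℝ[X]} (hs : Q.Splits) (z : ℂ) :
    |Q.leadingCoeff| * |z.im| ^ Q.natDegree ≤ ‖(Q.map ℝℂ).eval z‖ := by
  by_cases hQ : Q = 0
  · simp [hQ]
  have hcard : Multiset.card Q.roots = Q.natDegree := (splits_iff_card_roots).1 hs
  conv_lhs => rw [← hcard]
  have hprod := hs.eq_prod_roots
  have : (Q.map ℝℂ).eval z
      = ℝℂ Q.leadingCoeff * ((Q.roots.map fun a => z - ℝℂ a).prod) := by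
    conv_lhs => rw [hprod]
    rw [Polynomial.map_mul, Polynomial.map_multiset_prod, eval_mul, Multiset.map_map,
      eval_multiset_prod, Multiset.map_map]
    simp [Function.comp]
  rw [this, norm_mul]
  have h1 : ‖ℝℂ Q.leadingCoeff‖ = |Q.leadingCoeff| := by
    simp
  rw [h1]
  refine mul_le_mul_of_nonneg_left ?_ (abs_nonneg _)
  rw [← normHom_apply, map_multiset_prod (normHom : ℂ →*₀ ℝ), Multiset.map_map]
  induction Q.roots using Multiset.induction_on with
  | empty => simp
  | cons a s ih =>
    simp only [Multiset.map_cons, Multiset.prod_cons, Multiset.card_cons, pow_succ, Function.comp_apply, normHom_apply]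
    rw [mul_comm (|z.im| ^ Multiset.card s) (|z.im|)]
    refine mul_le_mul ?_ ih (by positivity) (norm_nonneg _)
    calc |z.im| = |(z - ℝℂ a).im| := by simp
    _ ≤ ‖z - ℝℂ a‖ := Complex.abs_im_le_norm _

/-- if all complex roots of a real polynomial are real, it splits over ℝ. -/
lemma splits_of_complex_roots_real (Q : ℝ[X])
    (h : ∀ z : ℂ, (Q.map ℝℂ).eval z = 0 → z.im = 0) : Q.Splits := by
  induction' hd : Q.natDegree using Nat.strong_induction_on with d ih generalizing Q
  · rcases Nat.eq_zero_or_pos d with rfl | hd1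
    · exact Splits.of_natDegree_le_one (by omega)
    have hQ0 : Q ≠ 0 := by
      intro h0; rw [h0] at hd; simp at hd; omega
    have hdeg : 0 < (Q.map ℝℂ).degree := by
      rw [degree_map]
      rw [Polynomial.degree_eq_natDegree hQ0]
      exact_mod_cast hd ▸ hd1
    obtain ⟨z, hz⟩ := Complex.exists_root hdeg
    have hzim : z.im = 0 := h z hz
    set x : ℝ := z.re with hx
    have hzx : z = ℝℂ x := by
      apply Complex.ext <;> simp [hzim, x]
    have hroot : Q.IsRoot x := by
      have h2 : (Q.map ℝℂ).eval (ℝℂ x) = ℝℂ (Q.eval x) := by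
        rw [eval_map, eval₂_at_apply]
      have hz' : (Q.map ℝℂ).eval (ℝℂ x) = 0 := by rw [← hzx]; exact hz
      rw [h2] at hz'
      rw [IsRoot.def]
      rw [Complex.coe_algebraMap] at hz'
      exact_mod_cast hz' 
    obtain ⟨R, hR⟩ := dvd_iff_isRoot.2 hroot
    have hRne : R ≠ 0 := by
      intro h0; rw [h0, mul_zero] at hR; exact hQ0 hR
    have hdR : R.natDegree = d - 1 := by
      have := hR ▸ hd
      rw [natDegree_mul (X_sub_C_ne_zero x) hRne, natDegree_X_sub_C] at this
      omega
    have hsplR : R.Splits := by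
      refine ih (d-1) (by omega) R ?_ hdR
      intro w hw
      apply h w
      rw [hR, Polynomial.map_mul, eval_mul, hw, mul_zero]
    rw [hR]
    exact (Splits.X_sub_C _).mul hsplR

/-- the derivative of a split real polynomial splits. -/
lemma splits_derivative {Q : ℝ[X]} (hs : Q.Splits) :
    (derivative Q).Splits := by
  by_cases h0 : derivative Q = 0
  · rw [h0]; exact Splits.zero
  have hQ0 : Q ≠ 0 := by
    intro h; rw [h] at h0; simp at h0
  rcases Nat.eq_zero_or_pos Q.natDegree with hd | hd
  · exact absurd (derivative_of_natDegree_zero hd) h0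
  have h1 : Multiset.card Q.roots = Q.natDegree := (splits_iff_card_roots).1 hs
  have h2 := Polynomial.card_roots_le_derivative Q
  have h3 : Multiset.card (derivative Q).roots ≤ (derivative Q).natDegree :=
    (derivative Q).card_roots' 
  have h4 : (derivative Q).natDegree ≤ Q.natDegree - 1 := natDegree_derivative_le Q
  rw [splits_iff_card_roots]
  omega

noncomputable def Tt (c : ℝ) (q : ℝ[X]) : ℝ[X] := derivative q + C c * q

@[simp] lemma Tt_zero (c : ℝ) : Tt c 0 = 0 := by simp [Tt]

lemma coeff_Tt_natDegree (c : ℝ) (q : ℝ[X]) :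
    (Tt c q).coeff q.natDegree = c * q.leadingCoeff := by
  rw [Tt, coeff_add, coeff_derivative, coeff_natDegree_succ_eq_zero, coeff_C_mul,
    zero_mul, zero_add, leadingCoeff]

lemma natDegree_Tt_le (c : ℝ) (q : ℝ[X]) : (Tt c q).natDegree ≤ q.natDegree :=
  le_trans (natDegree_add_le _ _) (max_le
    (le_trans (natDegree_derivative_le q) (Nat.sub_le _ _))
    (le_trans (natDegree_C_mul_le _ _) le_rfl))

lemma Tt_ne_zero_natDegree {c : ℝ} (hc : c ≠ 0) {q : ℝ[X]} (hq : q ≠ 0) :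
    Tt c q ≠ 0 ∧ (Tt c q).natDegree = q.natDegree := by
  have h1 := coeff_Tt_natDegree c q
  have hne : c * q.leadingCoeff ≠ 0 := mul_ne_zero hc (leadingCoeff_ne_zero.2 hq)
  have h2 : (Tt c q).coeff q.natDegree ≠ 0 := by rw [h1]; exact hne
  refine ⟨fun h0 => by rw [h0] at h2; simp at h2, ?_⟩
  exact le_antisymm (natDegree_Tt_le c q) (le_natDegree_of_ne_zero h2)

lemma Tt_splits {c : ℝ} (hc : c ≠ 0) {q : ℝ[X]} (hq : q ≠ 0)
    (hs : q.Splits) : (Tt c q).Splits := by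
  rcases Nat.eq_zero_or_pos q.natDegree with hd | hd
  · obtain ⟨a, rfl⟩ : ∃ a, q = C a := ⟨q.coeff 0, eq_C_of_natDegree_eq_zero hd⟩
    rw [Tt, derivative_C, ← C_mul, zero_add]
    exact Splits.C _
  set d := q.natDegree with hdd
  set L := q.leadingCoeff with hL
  have hLne : L ≠ 0 := leadingCoeff_ne_zero.2 hq
  apply splits_of_complex_roots_real
  intro z hz
  by_contra him
  -- main quantitative bound, for every N ≥ 1
  have key : ∀ N : ℕ, 1 ≤ N →
      |c| * |L| * |z.im| ^ d ≤ (|c| / N) *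
        (‖z‖ * ‖(map ℝℂ (derivative q)).eval z‖) := by
    intro N hN
    have hNR : (0:ℝ) < N := by exact_mod_cast hN
    set ε : ℝ := c / N with hε
    have hεne : ε ≠ 0 := div_ne_zero hc (ne_of_gt hNR)
    set u : ℝ[X] := C ε * X + 1 with hu
    have hune : u ≠ 0 := Pp_factor_ne ε
    have hudeg : u.natDegree = 1 := by
      rw [hu, show (1:ℝ[X]) = C 1 by rw [map_one]]
      exact natDegree_linear hεne
    set G : ℝ[X] := derivative q * u + C c * q with hG
    -- derivative of q * u ^ N
    have hder : derivative (q * u ^ N) = u ^ (N - 1) * G := by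
      rw [derivative_mul, derivative_pow, hu]
      rw [show derivative (C ε * X + 1) = C ε by simp]
      have hNN : (N:ℝ[X]) = C (N:ℝ) := (Polynomial.C_eq_natCast N).symm
      have huN : u ^ N = u ^ (N-1) * u := by
        conv_lhs => rw [show N = (N-1)+1 by omega]
        rw [pow_succ]
      rw [huN, hG, hu]
      have hNc : (C ((N:ℝ)) * C ε : ℝ[X]) = C c := by
        rw [← C_mul, hε]
        congr 1
        field_simp
      linear_combination (q * (C ε * X + 1)^(N-1)) * hNc
    -- G splits
    have hWsplits : (q * u ^ N).Splits :=
      hs.mul ((Splits.of_natDegree_le_one hudeg.le).pow _)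
    have hWdeg : (q * u ^ N).natDegree = d + N := by
      rw [natDegree_mul hq (pow_ne_zero _ hune), natDegree_pow, hudeg, mul_one]
    have hdW : derivative (q * u ^ N) ≠ 0 := by
      intro h0
      have := natDegree_eq_zero_of_derivative_eq_zero h0
      omega
    have hGsplits : G.Splits := by
      have hsp := splits_derivative hWsplits
      rw [hder] at hsp hdW
      exact ((splits_mul (left_ne_zero_of_mul hdW) (right_ne_zero_of_mul hdW)).1 hsp).2
    -- coeff d of G
    have hqd : q.coeff d ≠ 0 := by rw [hdd, coeff_natDegree]; exact hLne
    have hGcoeff : G.coeff d = c * L * (1 + d / N) := by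
      have hXq : (X * derivative q).coeff d = q.coeff d * d := by
        conv_lhs => rw [show d = (d-1)+1 by omega]
        rw [coeff_X_mul, coeff_derivative]
        have : ((d:ℝ) - 1) + 1 = d := by
          have : (1:ℝ) ≤ (d:ℝ) := by exact_mod_cast hd
          ring
        rw [show (d-1)+1 = d by omega]
        push_cast [Nat.cast_sub hd]
        ring
      have hGeq : G = Tt c q + C ε * (X * derivative q) := by
        rw [hG, hu, Tt]; ring
      rw [hGeq, coeff_add, coeff_Tt_natDegree, coeff_C_mul, hXq]
      rw [hdd, coeff_natDegree, ← hL, hε]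
      field_simp
    have hGcoeffne : G.coeff d ≠ 0 := by
      rw [hGcoeff]
      have h1 : (0:ℝ) < 1 + d / N := by positivity
      exact mul_ne_zero (mul_ne_zero hc hLne) (ne_of_gt h1)
    have hGdegle : G.natDegree ≤ d := by
      have h1 : (derivative q * u).natDegree ≤ d := by
        refine le_trans (natDegree_mul_le) ?_
        have := natDegree_derivative_le q
        omega
      have h2 : (C c * q).natDegree ≤ d := natDegree_C_mul_le _ _
      exact le_trans (natDegree_add_le _ _) (max_le h1 h2)
    have hGdeg : G.natDegree = d :=
      le_antisymm hGdegle (le_natDegree_of_ne_zero hGcoeffne)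
    have hGlead : G.leadingCoeff = c * L * (1 + d / N) := by
      rw [leadingCoeff, hGdeg, hGcoeff]
    -- lower bound via abs_eval_ge_of_splits
    have hlow := abs_eval_ge_of_splits hGsplits z
    rw [hGlead, hGdeg] at hlow
    -- value of G at z
    have hGeq : G = Tt c q + C ε * (X * derivative q) := by
      rw [hG, hu, Tt]; ring
    have hGval : ‖(G.map ℝℂ).eval z‖
        = (|c| / N) * (‖z‖ * ‖(map ℝℂ (derivative q)).eval z‖) := by
      rw [hGeq, Polynomial.map_add, Polynomial.map_mul, Polynomial.map_mul,
        Polynomial.map_C, Polynomial.map_X, eval_add, eval_mul, eval_mul, eval_C, eval_X,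
        hz, zero_add, norm_mul, norm_mul]
      have : ‖ℝℂ ε‖ = |c| / N := by
        rw [Complex.coe_algebraMap, Complex.norm_real, Real.norm_eq_abs, hε, abs_div]
        simp [abs_of_pos hNR]
      rw [this]
    rw [hGval] at hlow
    refine le_trans ?_ hlow
    have hfac : |c| * |L| ≤ |c * L * (1 + (d:ℝ) / N)| := by
      rw [abs_mul, abs_mul, abs_of_pos (by positivity : (0:ℝ) < 1 + (d:ℝ) / N)]
      nlinarith [abs_nonneg c, abs_nonneg L, (by positivity : (0:ℝ) ≤ (d:ℝ)/N),
        mul_nonneg (abs_nonneg c) (abs_nonneg L)]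
    exact mul_le_mul_of_nonneg_right hfac (by positivity)
  -- contradiction by Archimedes
  set A : ℝ := |c| * |L| * |z.im| ^ d with hA
  have hApos : 0 < A := by
    refine mul_pos (mul_pos (abs_pos.2 hc) (abs_pos.2 hLne)) ?_
    exact pow_pos (abs_pos.2 him) d
  set B : ℝ := ‖z‖ * ‖(map ℝℂ (derivative q)).eval z‖ with hB
  have hBnonneg : 0 ≤ B := mul_nonneg (norm_nonneg _) (norm_nonneg _)
  obtain ⟨N, hNgt⟩ := exists_nat_gt (|c| * B / A)
  have hN1 : 1 ≤ max N 1 := le_max_right _ _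
  have hkey := key (max N 1) hN1
  have hNR : (0:ℝ) < (max N 1 : ℕ) := by exact_mod_cast hN1
  rw [div_mul_eq_mul_div, le_div_iff₀ hNR] at hkey
  have hNle : (N:ℝ) ≤ ((max N 1 : ℕ):ℝ) := by exact_mod_cast le_max_left N 1
  have : |c| * B / A < (max N 1 : ℕ) := lt_of_lt_of_le hNgt hNle
  rw [div_lt_iff₀ hApos] at this
  nlinarith
lemma sq_identity (a : ℝ) (M : Multiset ℝ) :
    (derivative (C a * (M.map fun r => X - C r).prod)) ^ 2
      = (C a * (M.map fun r => X - C r).prod) *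
          derivative (derivative (C a * (M.map fun r => X - C r).prod))
        + (M.map fun r => (C a * ((M.erase r).map fun s => X - C s).prod) ^ 2).sum := by
  induction M using Multiset.induction_on with
  | empty => simp
  | cons ρ M ih =>
    have herase : ∀ r ∈ M, ((ρ ::ₘ M).erase r) = ρ ::ₘ (M.erase r) := by
      intro r hr
      exact Multiset.erase_cons_tail_of_mem hr
    set R : ℝ[X] := C a * (M.map fun r => X - C r).prod with hR
    have hQ : C a * ((ρ ::ₘ M).map fun r => X - C r).prod = (X - C ρ) * R := by
      rw [Multiset.map_cons, Multiset.prod_cons, hR]; ring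
    rw [hQ]
    have hmc : (M.map fun r => (C a * (((ρ ::ₘ M).erase r).map fun s => X - C s).prod) ^ 2)
        = (M.map fun r =>
            (X - C ρ) ^ 2 * (C a * ((M.erase r).map fun s => X - C s).prod) ^ 2) := by
      apply Multiset.map_congr rfl
      intro r hr
      rw [herase r hr, Multiset.map_cons, Multiset.prod_cons]
      ring
    have hsum : ((ρ ::ₘ M).map fun r =>
          (C a * (((ρ ::ₘ M).erase r).map fun s => X - C s).prod) ^ 2).sum
        = R ^ 2 + (X - C ρ) ^ 2 *
            (M.map fun r => (C a * ((M.erase r).map fun s => X - C s).prod) ^ 2).sum := by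
      rw [Multiset.map_cons, Multiset.erase_cons_head, Multiset.sum_cons, hmc,
        Multiset.sum_map_mul_left]
    rw [hsum]
    clear_value R
    have hd1 : derivative ((X - C ρ) * R) = R + (X - C ρ) * derivative R := by
      rw [derivative_mul]; simp
    have hd2 : derivative (R + (X - C ρ) * derivative R)
        = 2 * derivative R + (X - C ρ) * derivative (derivative R) := by
      rw [derivative_add, derivative_mul]
      simp only [derivative_sub, derivative_X, derivative_C, sub_zero, one_mul]
      ring
    rw [hd1, hd2]
    linear_combination (X - C ρ) ^ 2 * ih

lemma delta_pos {Q : ℝ[X]} (hQ : Q ≠ 0) (hs : Q.Splits)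
    (hdeg : 1 ≤ Q.natDegree)
    (hmult : Q.eval 0 ≠ 0 ∨ (derivative Q).eval 0 ≠ 0) :
    0 < ((derivative Q).eval 0) ^ 2 - Q.eval 0 * (derivative (derivative Q)).eval 0 := by
  classical
  have hprod := hs.eq_prod_roots
  set a := Q.leadingCoeff with ha
  set M := Q.roots with hM
  have hid := sq_identity a M
  rw [← hprod] at hid
  -- evaluate at 0
  have hev := congrArg (eval 0) hid
  simp only [eval_add, eval_mul, eval_pow] at hev
  set v : ℝ → ℝ := fun r => eval 0 (C a * ((M.erase r).map fun s => X - C s).prod) with hv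
  have hsum0 : eval 0 ((M.map fun r =>
        (C a * ((M.erase r).map fun s => X - C s).prod) ^ 2).sum)
      = (M.map fun r => (v r) ^ 2).sum := by
    rw [show (eval 0 : ℝ[X] → ℝ) = (evalRingHom 0 : ℝ[X] →+* ℝ) from rfl]
    rw [map_multiset_sum, Multiset.map_map]
    congr 1
    apply Multiset.map_congr rfl
    intro r _
    simp [hv]
  rw [hsum0] at hev
  -- find a strictly positive term
  have hMne : M ≠ 0 := by
    intro h0
    have := (splits_iff_card_roots).1 hs
    rw [← hM, h0] at this
    simp at this
    omega
  have hnonneg : ∀ x ∈ (M.map fun r => (v r) ^ 2), 0 ≤ x := by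
    intro x hx
    obtain ⟨r, _, rfl⟩ := Multiset.mem_map.1 hx
    exact sq_nonneg _
  have hterm : ∃ ρ ∈ M, v ρ ≠ 0 := by
    by_cases h0 : Q.eval 0 ≠ 0
    · obtain ⟨ρ, hρ⟩ := Multiset.exists_mem_of_ne_zero hMne
      refine ⟨ρ, hρ, ?_⟩
      have hQ0 : Q.eval 0 = (0 - ρ) * v ρ := by
        conv_lhs => rw [hprod, ← Multiset.prod_map_erase (f := fun r => X - C r) hρ]
        simp only [eval_mul, eval_sub, eval_X, eval_C, hv]
        ring
      intro hz
      rw [hQ0, hz, mul_zero] at h0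
      exact h0 rfl
    · push_neg at h0
      have h1 : (derivative Q).eval 0 ≠ 0 := by
        rcases hmult with h | h
        · exact absurd h0 h
        · exact h
      have hρ : (0:ℝ) ∈ M := by
        rw [hM, mem_roots hQ]
        exact h0
      refine ⟨0, hρ, ?_⟩
      have hQfac : Q = (X - C 0) * (C a * ((M.erase 0).map fun s => X - C s).prod) := by
        conv_lhs => rw [hprod, ← Multiset.prod_map_erase (f := fun r => X - C r) hρ]
        ring
      have hder : derivative Q
          = (C a * ((M.erase 0).map fun s => X - C s).prod)
            + (X - C 0) * derivative (C a * ((M.erase 0).map fun s => X - C s).prod) := by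
        conv_lhs => rw [hQfac]
        rw [derivative_mul]
        simp
      intro hz
      apply h1
      have hv0 : eval 0 (C a * ((M.erase 0).map fun s => X - C s).prod) = v 0 := by rw [hv]
      rw [hder, eval_add, hv0, hz]
      simp
  obtain ⟨ρ, hρ, hvρ⟩ := hterm
  have hmem : (v ρ) ^ 2 ∈ (M.map fun r => (v r) ^ 2) := Multiset.mem_map_of_mem _ hρ
  have hle : (v ρ) ^ 2 ≤ (M.map fun r => (v r) ^ 2).sum := by
    rw [← Multiset.cons_erase hmem, Multiset.sum_cons]
    have h2 : 0 ≤ ((M.map fun r => (v r) ^ 2).erase ((v ρ) ^ 2)).sum :=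
      Multiset.sum_nonneg (fun x hx => hnonneg x (Multiset.mem_of_mem_erase hx))
    linarith
  have hpos : 0 < (v ρ) ^ 2 := by positivity
  linarith

noncomputable def Qit (c : ℝ) (p : ℝ[X]) (j : ℕ) : ℝ[X] := (Tt c)^[j] p

lemma Qit_succ (c : ℝ) (p : ℝ[X]) (j : ℕ) : Qit c p (j+1) = Tt c (Qit c p j) :=
  Function.iterate_succ_apply' _ _ _

lemma Qit_eq_sum (c : ℝ) (p : ℝ[X]) (j : ℕ) :
    Qit c p j
      = ∑ i ∈ Finset.range (j+1), C ((j.choose i : ℝ) * c ^ (j - i)) * derivative^[i] p := by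
  induction j with
  | zero => simp [Qit]
  | succ j ih =>
    rw [Qit_succ, ih, Tt, derivative_sum, Finset.mul_sum]
    have h1 : ∀ i ∈ Finset.range (j+1),
        derivative (C ((j.choose i : ℝ) * c ^ (j - i)) * derivative^[i] p)
          = C ((j.choose i : ℝ) * c ^ (j - i)) * derivative^[i+1] p := by
      intro i _
      rw [derivative_C_mul, Function.iterate_succ_apply']
    have h2 : ∀ i ∈ Finset.range (j+1),
        C c * (C ((j.choose i : ℝ) * c ^ (j - i)) * derivative^[i] p)
          = C ((j.choose i : ℝ) * c ^ (j + 1 - i)) * derivative^[i] p := by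
      intro i hi
      rw [Finset.mem_range] at hi
      rw [← mul_assoc, ← C_mul, show j + 1 - i = (j - i) + 1 by omega, pow_succ]
      ring_nf
    rw [Finset.sum_congr rfl h1, Finset.sum_congr rfl h2]
    rw [Finset.sum_range_succ'
      (fun i => C ((((j+1).choose i : ℕ) : ℝ) * c ^ (j + 1 - i)) * derivative^[i] p) (j+1)]
    rw [Finset.sum_range_succ'
      (fun i => C ((j.choose i : ℝ) * c ^ (j + 1 - i)) * derivative^[i] p) j]
    have h3 : (∑ i ∈ Finset.range j,
          C ((j.choose (i+1) : ℝ) * c ^ (j + 1 - (i+1))) * derivative^[i+1] p)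
        = ∑ i ∈ Finset.range (j+1),
          C ((j.choose (i+1) : ℝ) * c ^ (j + 1 - (i+1))) * derivative^[i+1] p := by
      rw [Finset.sum_range_succ, Nat.choose_succ_self]
      simp
    rw [h3, ← add_assoc, ← Finset.sum_add_distrib]
    congr 1
    · refine Finset.sum_congr rfl fun i hi => ?_
      rw [Finset.mem_range] at hi
      rw [← add_mul, ← C_add]
      congr 2
      rw [Nat.succ_sub_succ]
      push_cast [Nat.choose_succ_succ']
      ring
    · simp

lemma Qit_eval_zero (c : ℝ) {n : ℕ} (μ : Fin n → ℝ) (j : ℕ) :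
    (Qit c (Pp μ) j).eval 0 = (j.factorial : ℝ) * sigmaInf c μ j := by
  rw [Qit_eq_sum, eval_finset_sum]
  have hterm : ∀ i ∈ Finset.range (j+1),
      eval 0 (C ((j.choose i : ℝ) * c ^ (j - i)) * derivative^[i] (Pp μ))
        = (j.choose i : ℝ) * c ^ (j-i) * ((i.factorial : ℝ) * esymm μ i) := by
    intro i _
    rw [eval_mul, eval_C]
    congr 1
    rw [← coeff_zero_eq_eval_zero, coeff_iterate_derivative, zero_add, coeff_Pp,
      Nat.descFactorial_self, nsmul_eq_mul]
  rw [Finset.sum_congr rfl hterm, sigmaInf, Finset.mul_sum]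
  rw [← Finset.sum_range_reflect
    (fun t => (j.factorial : ℝ) * (c ^ t / (t.factorial : ℝ) * esymm μ (j - t))) (j+1)]
  refine Finset.sum_congr rfl fun i hi => ?_
  rw [Finset.mem_range] at hi
  have hij : i ≤ j := by omega
  rw [show j + 1 - 1 - i = j - i by omega, Nat.sub_sub_self hij]
  have hfac : ((j.choose i : ℝ) * (i.factorial : ℝ) * ((j-i).factorial : ℝ)) = (j.factorial :ℝ) := by
    exact_mod_cast congrArg (Nat.cast : ℕ → ℝ) (Nat.choose_mul_factorial_mul_factorial hij)
  have hne : (((j-i).factorial : ℕ) : ℝ) ≠ 0 := Nat.cast_ne_zero.2 (Nat.factorial_ne_zero _)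
  field_simp
  linear_combination (c ^ (j-i) * esymm μ i) * hfac

-- derived lemmas
lemma Tt_zero_c (q : ℝ[X]) : Tt 0 q = derivative q := by simp [Tt]

lemma Qit_zero_c (p : ℝ[X]) (j : ℕ) : Qit 0 p j = derivative^[j] p := by
  induction j with
  | zero => rfl
  | succ j ih => rw [Qit_succ, ih, Tt_zero_c, Function.iterate_succ_apply']

lemma natDegree_derivative_eq' {q : ℝ[X]} (h : 1 ≤ q.natDegree) :
    (derivative q).natDegree = q.natDegree - 1 := by
  refine le_antisymm (natDegree_derivative_le q) (le_natDegree_of_ne_zero ?_)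
  rw [coeff_derivative, show q.natDegree - 1 + 1 = q.natDegree by omega]
  apply mul_ne_zero
  · rw [coeff_natDegree]
    exact leadingCoeff_ne_zero.2 (fun h0 => by rw [h0] at h; simp at h)
  · have : ((q.natDegree - 1 : ℕ) : ℝ) + 1 ≠ 0 := by positivity
    exact_mod_cast this

lemma iterate_derivative_facts {p : ℝ[X]} (hp : p ≠ 0) :
    ∀ j, j ≤ p.natDegree → derivative^[j] p ≠ 0 ∧
      (derivative^[j] p).natDegree = p.natDegree - j := by
  intro j
  induction j with
  | zero => exact fun _ => ⟨hp, by simp⟩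
  | succ j ih =>
    intro hj
    obtain ⟨h0, hdeg⟩ := ih (by omega)
    have hd1 : 1 ≤ (derivative^[j] p).natDegree := by omega
    constructor
    · rw [Function.iterate_succ_apply']
      intro hz
      have := natDegree_eq_zero_of_derivative_eq_zero hz
      omega
    · rw [Function.iterate_succ_apply', natDegree_derivative_eq' hd1, hdeg]
      omega

lemma Qit_facts_ne {c : ℝ} (hc : c ≠ 0) {p : ℝ[X]} (hp : p ≠ 0)
    (hs : p.Splits) :
    ∀ j, Qit c p j ≠ 0 ∧ (Qit c p j).natDegree = p.natDegree ∧
      (Qit c p j).Splits := by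
  intro j
  induction j with
  | zero => exact ⟨hp, rfl, hs⟩
  | succ j ih =>
    obtain ⟨h0, hdeg, hsp⟩ := ih
    obtain ⟨h0', hdeg'⟩ := Tt_ne_zero_natDegree hc h0
    rw [Qit_succ]
    exact ⟨h0', hdeg'.trans hdeg, Tt_splits hc h0 hsp⟩

lemma Qit_splits (c : ℝ) {p : ℝ[X]} (hs : p.Splits) :
    ∀ j, (Qit c p j).Splits := by
  intro j
  induction j with
  | zero => exact hs
  | succ j ih =>
    rw [Qit_succ]
    by_cases hq : Qit c p j = 0
    · rw [hq, Tt_zero]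
      exact Splits.zero
    by_cases hc : c = 0
    · subst hc
      rw [Tt_zero_c]
      exact splits_derivative ih
    · exact Tt_splits hc hq ih

lemma Qit_pred_ne_zero (c : ℝ) (p : ℝ[X]) {j : ℕ} (h : Qit c p (j+1) ≠ 0) :
    Qit c p j ≠ 0 := by
  intro h0
  rw [Qit_succ, h0, Tt_zero] at h
  exact h rfl

lemma chain (c : ℝ) (μ : Fin n → ℝ) :
    ∀ j, Qit c (Pp μ) j ≠ 0 →
      ((Qit c (Pp μ) j).eval 0 ≠ 0 ∨ (derivative (Qit c (Pp μ) j)).eval 0 ≠ 0) := by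
  intro j
  induction j with
  | zero =>
    intro _
    left
    rw [show Qit c (Pp μ) 0 = Pp μ from rfl, Pp_eval_zero]
    norm_num
  | succ j ih =>
    intro hne
    have hq : Qit c (Pp μ) j ≠ 0 := Qit_pred_ne_zero c _ hne
    have hsp : (Qit c (Pp μ) j).Splits := Qit_splits c (Pp_splits μ) j
    have hIH := ih hq
    set q := Qit c (Pp μ) j with hqdef
    rw [Qit_succ]
    by_contra hcon
    push_neg at hcon
    obtain ⟨h1, h2⟩ := hcon
    have hT0 : eval 0 (Tt c q) = (derivative q).eval 0 + c * q.eval 0 := by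
      simp [Tt]
    have hT1 : eval 0 (derivative (Tt c q))
        = (derivative (derivative q)).eval 0 + c * (derivative q).eval 0 := by
      simp [Tt, derivative_add, derivative_C_mul]
    rw [hT0] at h1
    rw [hT1] at h2
    rcases Nat.eq_zero_or_pos q.natDegree with hd | hd
    · -- q constant
      have hq' : derivative q = 0 := by
        rw [eq_C_of_natDegree_eq_zero hd]
        exact derivative_C
      have hqe : q.eval 0 ≠ 0 := by
        rcases hIH with h | h
        · exact h
        · rw [hq'] at h; simp at h
      rw [hq'] at h1
      simp at h1
      rcases h1 with h1 | h1
      · -- c = 0 : Tt c q = derivative q = 0, contradicting hne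
        rw [Qit_succ, ← hqdef, h1, Tt_zero_c, hq'] at hne
        exact hne rfl
      · exact hqe h1
    · have hpos := delta_pos hq hsp hd hIH
      have : ((derivative q).eval 0) ^ 2
          - q.eval 0 * (derivative (derivative q)).eval 0 = 0 := by
        linear_combination ((derivative q).eval 0) * h1 - q.eval 0 * h2
      linarith

lemma sigmaInf_zero_vec (c : ℝ) (j : ℕ) :
    sigmaInf c (0 : Fin n → ℝ) j = c ^ j / (j.factorial : ℝ) := by
  unfold sigmaInf
  rw [Finset.sum_eq_single j]
  · rw [esymm_zero_fun]
    simp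
  · intro t ht htj
    rw [Finset.mem_range] at ht
    rw [esymm_zero_fun, if_neg (by omega)]
    ring
  · intro h
    exact absurd (Finset.self_mem_range_succ j) h

lemma sigmaInf_zero_c (μ : Fin n → ℝ) (m : ℕ) : sigmaInf 0 μ m = esymm μ m := by
  unfold sigmaInf
  rw [Finset.sum_eq_single 0]
  · simp
  · intro t ht ht0
    rw [zero_pow ht0]
    ring
  · intro h
    simp at h

lemma fact_id (K : ℕ) :
    (K.factorial : ℝ) * ((K+2).factorial : ℝ) * ((K:ℝ)+1)
      = ((K+1).factorial : ℝ)^2 * ((K:ℝ)+2) := by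
  have h1 : (K+1).factorial = (K+1) * K.factorial := Nat.factorial_succ K
  have h2 : (K+2).factorial = (K+2) * (K+1).factorial := Nat.factorial_succ (K+1)
  rw [h2, h1]
  push_cast
  ring

end WNaux

open WNaux

/-- Equality in the weighted Newton inequality holds if and only if `μ = 0`, or `μ₀ = 0`
and at most `k - 1` of the coordinates of `μ` are nonzero. -/
theorem weighted_newton_inequality_equality_iff {n : ℕ} (k : ℕ) (hk : 1 ≤ k) (μ₀ : ℝ)
    (μ : Fin n → ℝ) :
    sigmaInf μ₀ μ (k - 1) * sigmaInf μ₀ μ (k + 1)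
        = (k : ℝ) / ((k : ℝ) + 1) * (sigmaInf μ₀ μ k) ^ 2
      ↔ μ = 0 ∨ (μ₀ = 0 ∧ (Finset.univ.filter fun i => μ i ≠ 0).card ≤ k - 1) := by
  obtain ⟨K, rfl⟩ : ∃ K, k = K + 1 := ⟨k - 1, by omega⟩
  simp only [Nat.add_sub_cancel]
  have hfac2 := fact_id K
  have hfK : ((K.factorial : ℕ) : ℝ) ≠ 0 := Nat.cast_ne_zero.2 (Nat.factorial_ne_zero _)
  have hfK1 : (((K+1).factorial : ℕ) : ℝ) ≠ 0 := Nat.cast_ne_zero.2 (Nat.factorial_ne_zero _)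
  have hfK2 : (((K+2).factorial : ℕ) : ℝ) ≠ 0 := Nat.cast_ne_zero.2 (Nat.factorial_ne_zero _)
  have hKpos : (0:ℝ) < (K:ℝ) + 1 := by positivity
  have hK2pos : (0:ℝ) < (K:ℝ) + 2 := by positivity
  constructor
  · intro heq
    by_cases hμ : μ = 0
    · exact Or.inl hμ
    -- set up the polynomial machinery
    set Q : ℝ[X] := Qit μ₀ (Pp μ) K with hQdef
    have hb0 : Q.eval 0 = (K.factorial : ℝ) * sigmaInf μ₀ μ K := Qit_eval_zero μ₀ μ K
    have hb1 : (derivative Q).eval 0 + μ₀ * Q.eval 0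
        = ((K+1).factorial : ℝ) * sigmaInf μ₀ μ (K+1) := by
      rw [← Qit_eval_zero μ₀ μ (K+1), Qit_succ, ← hQdef]
      simp [Tt]
    have hb2 : (derivative (derivative Q)).eval 0 + 2*μ₀*(derivative Q).eval 0
          + μ₀^2 * Q.eval 0
        = ((K+2).factorial : ℝ) * sigmaInf μ₀ μ (K+2) := by
      rw [← Qit_eval_zero μ₀ μ (K+2), show K+2 = (K+1)+1 from rfl, Qit_succ, Qit_succ, ← hQdef]
      simp [Tt, derivative_add, derivative_C_mul]
      ring
    -- Δ = 0 from the equality hypothesis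
    have hΔ : ((derivative Q).eval 0) ^ 2
        - Q.eval 0 * (derivative (derivative Q)).eval 0 = 0 := by
      have hkey : ((derivative Q).eval 0) ^ 2
          - Q.eval 0 * (derivative (derivative Q)).eval 0
          = (((K+1).factorial : ℝ) * sigmaInf μ₀ μ (K+1))^2
            - ((K.factorial : ℝ) * sigmaInf μ₀ μ K)
              * (((K+2).factorial : ℝ) * sigmaInf μ₀ μ (K+2)) := by
        rw [← hb0, ← hb1, ← hb2]
        ring
      have heq2 : ((K:ℝ)+2) * (sigmaInf μ₀ μ K * sigmaInf μ₀ μ (K+2))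
          = ((K:ℝ)+1) * sigmaInf μ₀ μ (K+1)^2 := by
        have h0 : sigmaInf μ₀ μ (K+1+1) = sigmaInf μ₀ μ (K+2) := rfl
        rw [← h0, heq]
        push_cast
        field_simp
        ring
      have hT : (((((K+1).factorial:ℕ):ℝ) * sigmaInf μ₀ μ (K+1)) ^ 2 -
            ((K.factorial:ℕ):ℝ) * sigmaInf μ₀ μ K
              * ((((K+2).factorial:ℕ):ℝ) * sigmaInf μ₀ μ (K+2))) * ((K:ℝ)+2) = 0 := by
        linear_combination (-(((K.factorial:ℕ):ℝ) * (((K+2).factorial:ℕ):ℝ))) * heq2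
          - (sigmaInf μ₀ μ (K+1))^2 * hfac2
      rw [hkey]
      rcases mul_eq_zero.1 hT with h | h
      · exact h
      · exact absurd h hK2pos.ne' 
    -- degree facts
    have hr1 : 1 ≤ (Finset.univ.filter fun i => μ i ≠ 0).card := by
      rw [Nat.succ_le_iff, Finset.card_pos]
      obtain ⟨i, hi⟩ := Function.ne_iff.1 hμ
      exact ⟨i, Finset.mem_filter.2 ⟨Finset.mem_univ _, by simpa using hi⟩⟩
    by_cases hc : μ₀ = 0
    · refine Or.inr ⟨hc, ?_⟩
      by_contra hrK
      push_neg at hrK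
      -- K < r
      have hKr : K + 1 ≤ (Finset.univ.filter fun i => μ i ≠ 0).card := hrK
      have hQd : Q = derivative^[K] (Pp μ) := by rw [hQdef, hc, Qit_zero_c]
      obtain ⟨hQne, hQdeg⟩ := iterate_derivative_facts (Pp_ne_zero μ) K
        (by rw [Pp_natDegree]; omega)
      rw [← hQd] at hQne hQdeg
      have hdeg1 : 1 ≤ Q.natDegree := by
        rw [hQdeg, Pp_natDegree]
        omega
      have hsp : Q.Splits := Qit_splits μ₀ (Pp_splits μ) K
      have hmult := chain μ₀ μ K hQne
      have := delta_pos hQne hsp hdeg1 hmult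
      linarith
    · exfalso
      obtain ⟨hQne, hQdeg, hsp⟩ := Qit_facts_ne hc (Pp_ne_zero μ) (Pp_splits μ) K
      have hdeg1 : 1 ≤ Q.natDegree := by
        rw [hQdef, hQdeg, Pp_natDegree]
        omega
      have hmult := chain μ₀ μ K hQne
      have := delta_pos hQne hsp hdeg1 hmult
      linarith
  · intro h
    rcases h with hμ | ⟨hc, hrK⟩
    · subst hμ
      rw [sigmaInf_zero_vec, sigmaInf_zero_vec, sigmaInf_zero_vec]
      have efac : (((K+1+1).factorial:ℕ):ℝ) = (((K+2).factorial:ℕ):ℝ) := rfl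
      rw [efac, div_mul_div_comm, div_pow, div_mul_div_comm,
        div_eq_div_iff (mul_ne_zero hfK hfK2)
          (mul_ne_zero (by positivity) (pow_ne_zero _ hfK1))]
      push_cast
      linear_combination (-(μ₀^(K+1) * μ₀^(K+1))) * hfac2
    · subst hc
      rw [sigmaInf_zero_c, sigmaInf_zero_c, sigmaInf_zero_c]
      rw [esymm_eq_zero (by omega : (Finset.univ.filter fun i => μ i ≠ 0).card < K+1+1),
        esymm_eq_zero (by omega : (Finset.univ.filter fun i => μ i ≠ 0).card < K+1)]
      ring
end

section
/- Let k ≥ 1 be an integer and suppose (μ₀;μ) ∈ Γ_k^{∞,−}. Then (−1)^{k+1}·(k+1)·σ_{k+1}^∞(μ₀;μ) ≤ (−1)^{k+1}·σ_1^∞(μ₀;μ)·σ_k^∞(μ₀;μ), and equality holds if and only if μ = 0. -/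
open Filter Set
open Polynomial Finset

namespace WNCI

variable {n : ℕ} (μ : Fin n → ℝ)

noncomputable def Es (s : Finset (Fin n)) (m : ℕ) : ℝ :=
  ∑ t ∈ Finset.powersetCard m s, ∏ i ∈ t, μ i

lemma esymm_eq_Es (m : ℕ) : esymm μ m = Es μ Finset.univ m := rfl

@[simp] lemma Es_zero (s : Finset (Fin n)) : Es μ s 0 = 1 := by
  simp [Es]

@[simp] lemma Es_empty_succ (m : ℕ) : Es μ (∅ : Finset (Fin n)) (m + 1) = 0 := by
  rw [Es, Finset.powersetCard_eq_empty.2 (by simp), Finset.sum_empty]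

lemma Es_insert {i : Fin n} {s : Finset (Fin n)} (hi : i ∉ s) (m : ℕ) :
    Es μ (insert i s) (m + 1) = Es μ s (m + 1) + μ i * Es μ s m := by
  unfold Es
  rw [Finset.powersetCard_succ_insert hi, Finset.sum_union, Finset.sum_image]
  · congr 1
    rw [Finset.mul_sum]
    refine Finset.sum_congr rfl fun t ht => ?_
    rw [Finset.prod_insert fun hit => hi ((Finset.mem_powersetCard.1 ht).1 hit)]
  · intro t ht u hu htu
    have ht' : i ∉ t := fun hit => hi <| (Finset.mem_powersetCard.1 ht).1 hit
    have hu' : i ∉ u := fun hiu => hi <| (Finset.mem_powersetCard.1 hu).1 hiu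
    have := congrArg (Finset.erase · i) htu
    simpa [Finset.erase_insert ht', Finset.erase_insert hu'] using this
  · rw [Finset.disjoint_right]
    rintro t ht hts
    obtain ⟨u, hu, rfl⟩ := Finset.mem_image.1 ht
    exact hi ((Finset.mem_powersetCard.1 hts).1 (Finset.mem_insert_self i u))

noncomputable def SigP (s : Finset (Fin n)) (k : ℕ) : ℝ[X] :=
  ∑ j ∈ Finset.range (k + 1), C (Es μ s (k - j) / (Nat.factorial j : ℝ)) * X ^ j

lemma sigmaInf_eq_eval (μ₀ : ℝ) (k : ℕ) :
    sigmaInf μ₀ μ k = (SigP μ Finset.univ k).eval μ₀ := by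
  unfold sigmaInf SigP
  rw [Polynomial.eval_finset_sum]
  refine Finset.sum_congr rfl fun j _ => ?_
  rw [esymm_eq_Es]
  simp only [Polynomial.eval_mul, Polynomial.eval_C, Polynomial.eval_pow, Polynomial.eval_X]
  ring

lemma SigP_coeff (s : Finset (Fin n)) (k j : ℕ) :
    (SigP μ s k).coeff j =
      if j ≤ k then Es μ s (k - j) / (Nat.factorial j : ℝ) else 0 := by
  unfold SigP
  rw [Polynomial.finset_sum_coeff]
  simp only [Polynomial.coeff_C_mul, Polynomial.coeff_X_pow, mul_ite, mul_one, mul_zero]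
  rw [Finset.sum_ite_eq (Finset.range (k + 1)) j
    (fun i => Es μ s (k - i) / (Nat.factorial i : ℝ))]
  simp only [Finset.mem_range, Nat.lt_succ_iff]

@[simp] lemma SigP_zero (s : Finset (Fin n)) : SigP μ s 0 = 1 := by
  unfold SigP
  simp [Es_zero]

lemma SigP_coeff_top (s : Finset (Fin n)) (k : ℕ) :
    (SigP μ s k).coeff k = 1 / (Nat.factorial k : ℝ) := by
  rw [SigP_coeff, if_pos le_rfl, Nat.sub_self, Es_zero]

lemma SigP_natDegree (s : Finset (Fin n)) (k : ℕ) : (SigP μ s k).natDegree = k := by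
  apply le_antisymm
  · apply Polynomial.natDegree_le_iff_coeff_eq_zero.2
    intro j hj
    rw [SigP_coeff, if_neg (by omega)]
  · apply Polynomial.le_natDegree_of_ne_zero
    rw [SigP_coeff_top]
    exact one_div_ne_zero (Nat.cast_ne_zero.2 (Nat.factorial_ne_zero k))

lemma SigP_ne_zero (s : Finset (Fin n)) (k : ℕ) : SigP μ s k ≠ 0 := by
  intro h
  have h2 := SigP_coeff_top μ s k
  rw [h, Polynomial.coeff_zero] at h2
  exact one_div_ne_zero (Nat.cast_ne_zero.2 (Nat.factorial_ne_zero k)) h2.symm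

lemma SigP_derivative (s : Finset (Fin n)) (k : ℕ) :
    derivative (SigP μ s (k + 1)) = SigP μ s k := by
  unfold SigP
  rw [derivative_sum]
  have h1 : ∀ j ∈ Finset.range (k + 2),
      derivative (C (Es μ s (k + 1 - j) / (Nat.factorial j : ℝ)) * X ^ j)
        = C (Es μ s (k + 1 - j) / (Nat.factorial j : ℝ) * j) * X ^ (j - 1) := by
    intro j _
    rw [Polynomial.derivative_C_mul, Polynomial.derivative_X_pow, C_mul, mul_assoc,
      mul_comm (C (j : ℝ))]
  rw [Finset.sum_congr rfl h1, Finset.sum_range_succ']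
  simp only [Nat.cast_zero, mul_zero, map_zero, zero_mul, add_zero, Nat.add_sub_cancel]
  refine Finset.sum_congr rfl fun j hj => ?_
  have h2 : k + 1 - (j + 1) = k - j := by omega
  rw [h2]
  congr 2
  rw [Nat.factorial_succ]
  have h3 : (Nat.factorial j : ℝ) ≠ 0 := Nat.cast_ne_zero.2 (Nat.factorial_ne_zero j)
  push_cast
  field_simp

lemma SigP_insert {i : Fin n} {s : Finset (Fin n)} (hi : i ∉ s) (k : ℕ) :
    SigP μ (insert i s) (k + 1) = SigP μ s (k + 1) + C (μ i) * SigP μ s k := by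
  apply Polynomial.ext
  intro j
  rw [Polynomial.coeff_add, Polynomial.coeff_C_mul, SigP_coeff, SigP_coeff, SigP_coeff]
  rcases le_or_gt j k with hj | hj
  · rw [if_pos (by omega), if_pos (by omega), if_pos hj]
    have h1 : k + 1 - j = (k - j) + 1 := by omega
    rw [h1, Es_insert μ hi]
    ring
  · rcases eq_or_lt_of_le (Nat.succ_le_of_lt hj) with rfl | hj'
    · rw [if_pos (by omega), if_pos (by omega), if_neg (by omega), Nat.sub_self]
      simp
    · rw [if_neg (by omega), if_neg (by omega), if_neg (by omega)]
      ring






/-- Real-rooted polynomial -/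
def RR (p : ℝ[X]) : Prop := Multiset.card p.roots = p.natDegree

lemma laguerre_step {q : ℝ[X]} (a x : ℝ)
    (key : q.eval x * (derivative (derivative q)).eval x ≤ (derivative q).eval x ^ 2) :
    ((X - C a) * q).eval x * (derivative (derivative ((X - C a) * q))).eval x
      ≤ (derivative ((X - C a) * q)).eval x ^ 2 := by
  have hd1 : derivative ((X - C a) * q) = q + (X - C a) * derivative q := by
    rw [derivative_mul, derivative_sub, derivative_X, derivative_C, sub_zero, one_mul]
  have hd2 : derivative (q + (X - C a) * derivative q)
      = 2 * derivative q + (X - C a) * derivative (derivative q) := by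
    rw [derivative_add, derivative_mul, derivative_sub, derivative_X, derivative_C,
      sub_zero, one_mul]
    ring
  rw [hd1, hd2]
  simp only [eval_add, eval_mul, eval_sub, eval_X, eval_C, eval_ofNat]
  nlinarith [sq_nonneg (x - a), sq_nonneg (q.eval x),
    mul_nonneg (sq_nonneg (x - a)) (sub_nonneg.2 key)]

lemma laguerre_aux (M : Multiset ℝ) (lc : ℝ) (x : ℝ)
    (p : ℝ[X]) (hp : p = C lc * (M.map fun a => X - C a).prod) :
    p.eval x * (derivative (derivative p)).eval x ≤ (derivative p).eval x ^ 2 := by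
  induction M using Multiset.induction_on generalizing p lc with
  | empty =>
    subst hp; simp
  | cons a M ih =>
    have hq : p = (X - C a) * (C lc * (M.map fun a => X - C a).prod) := by
      rw [hp, Multiset.map_cons, Multiset.prod_cons]; ring
    rw [hq]
    exact laguerre_step a x (ih lc _ rfl)

lemma laguerre {p : ℝ[X]} (hp : RR p) (x : ℝ) :
    p.eval x * (derivative (derivative p)).eval x ≤ (derivative p).eval x ^ 2 :=
  laguerre_aux p.roots p.leadingCoeff x p (C_leadingCoeff_mul_prod_multiset_X_sub_C hp).symm

/-- exp(t/c) * p(t) → 0 as t → −∞, for c > 0 -/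
lemma tendsto_exp_mul_poly_atBot {c : ℝ} (hc : 0 < c) (p : ℝ[X]) :
    Tendsto (fun t : ℝ => Real.exp (t / c) * p.eval t) atBot (nhds 0) := by
  have base : ∀ m : ℕ, Tendsto (fun u : ℝ => u ^ m * Real.exp u) atBot (nhds 0) := by
    intro m
    have h1 := (Real.tendsto_pow_mul_exp_neg_atTop_nhds_zero m).comp
      (Filter.tendsto_neg_atBot_atTop (G := ℝ))
    have h2 : ((fun x : ℝ => x ^ m * Real.exp (-x)) ∘ (Neg.neg : ℝ → ℝ))
        = fun u : ℝ => (-u) ^ m * Real.exp u := by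
      funext u; simp
    rw [h2] at h1
    have h3 := h1.const_mul ((-1 : ℝ) ^ m)
    rw [mul_zero] at h3
    refine h3.congr fun u => ?_
    rw [← mul_assoc, ← mul_pow]
    ring_nf
  have hdiv : Tendsto (fun t : ℝ => t / c) atBot atBot :=
    Filter.Tendsto.atBot_div_const hc tendsto_id
  have hpow : ∀ m : ℕ, Tendsto (fun t : ℝ => t ^ m * Real.exp (t / c)) atBot (nhds 0) := by
    intro m
    have h1 := (base m).comp hdiv
    have h3 := h1.const_mul (c ^ m)
    rw [mul_zero] at h3
    refine h3.congr fun t => ?_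
    simp only [Function.comp_apply]
    rw [← mul_assoc, ← mul_pow, mul_div_cancel₀ _ hc.ne']
  induction p using Polynomial.induction_on' with
  | add p q hp hq =>
    have := hp.add hq
    rw [add_zero] at this
    refine this.congr fun t => ?_
    simp [mul_add]
  | monomial m a =>
    have h3 := (hpow m).const_mul a
    rw [mul_zero] at h3
    refine h3.congr fun t => ?_
    simp [Polynomial.eval_monomial]
    ring

/-- Rolle-type lemma at -∞ -/
lemma exists_deriv_zero_of_tendsto_atBot {f : ℝ → ℝ} (hf : Continuous f) {b : ℝ}
    (hb : f b = 0) (h0 : Tendsto f atBot (nhds 0)) {t₀ : ℝ} (ht₀ : t₀ < b) (hft₀ : f t₀ ≠ 0) :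
    ∃ z < b, deriv f z = 0 := by
  rcases lt_or_gt_of_ne hft₀ with hneg | hpos
  · -- f t₀ < 0 : use min
    have hev : ∀ᶠ t in atBot, f t₀ < f t := by
      have := h0.eventually (eventually_gt_nhds hneg)
      exact this
    obtain ⟨A, hA⟩ := (hev.and (eventually_lt_atBot t₀)).exists
    obtain ⟨z, hzmem, hz⟩ := IsCompact.exists_isMinOn isCompact_Icc
      (Set.nonempty_Icc.2 (by linarith)) hf.continuousOn (s := Set.Icc A b)
    have hzval : f z ≤ f t₀ := hz ⟨by linarith, by linarith⟩
    have hzA : z ≠ A := fun h => by rw [h] at hzval; linarith [hA.1]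
    have hzb : z ≠ b := fun h => by rw [h, hb] at hzval; linarith
    have hzin : z ∈ Set.Ioo A b := ⟨lt_of_le_of_ne hzmem.1 (Ne.symm hzA), lt_of_le_of_ne hzmem.2 hzb⟩
    refine ⟨z, hzin.2, (IsMinOn.isLocalMin hz (Icc_mem_nhds hzin.1 hzin.2)).deriv_eq_zero⟩
  · have hev : ∀ᶠ t in atBot, f t < f t₀ := h0.eventually (eventually_lt_nhds hpos)
    obtain ⟨A, hA⟩ := (hev.and (eventually_lt_atBot t₀)).exists
    obtain ⟨z, hzmem, hz⟩ := IsCompact.exists_isMaxOn isCompact_Icc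
      (Set.nonempty_Icc.2 (by linarith)) hf.continuousOn (s := Set.Icc A b)
    have hzval : f t₀ ≤ f z := hz ⟨by linarith, by linarith⟩
    have hzA : z ≠ A := fun h => by rw [h] at hzval; linarith [hA.1]
    have hzb : z ≠ b := fun h => by rw [h, hb] at hzval; linarith
    have hzin : z ∈ Set.Ioo A b := ⟨lt_of_le_of_ne hzmem.1 (Ne.symm hzA), lt_of_le_of_ne hzmem.2 hzb⟩
    refine ⟨z, hzin.2, (IsMaxOn.isLocalMax hz (Icc_mem_nhds hzin.1 hzin.2)).deriv_eq_zero⟩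







lemma tendsto_exp_mul_poly_atTop {c : ℝ} (hc : c < 0) (p : ℝ[X]) :
    Tendsto (fun t : ℝ => Real.exp (t / c) * p.eval t) atTop (nhds 0) := by
  have h1 := (tendsto_exp_mul_poly_atBot (c := -c) (by linarith) (p.comp (-X))).comp
    (Filter.tendsto_neg_atTop_atBot (G := ℝ))
  refine h1.congr fun t => ?_
  simp only [Function.comp_apply, Polynomial.eval_comp, Polynomial.eval_neg, Polynomial.eval_X]
  rw [neg_div_neg_eq, neg_neg]

lemma exists_deriv_zero_of_tendsto_atTop {f : ℝ → ℝ} (hf : Continuous f) {b : ℝ}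
    (hb : f b = 0) (h0 : Tendsto f atTop (nhds 0)) {t₀ : ℝ} (ht₀ : b < t₀) (hft₀ : f t₀ ≠ 0) :
    ∃ z > b, deriv f z = 0 := by
  obtain ⟨z, hz1, hz2⟩ := exists_deriv_zero_of_tendsto_atBot (f := fun t => f (-t))
    (hf.comp continuous_neg) (b := -b) (by simpa using hb)
    (h0.comp (Filter.tendsto_neg_atBot_atTop (G := ℝ))) (t₀ := -t₀) (by linarith)
    (by simpa using hft₀)
  refine ⟨-z, by linarith, ?_⟩
  have := deriv_comp_neg (f := f) (x := z)
  rw [hz2] at this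
  linarith [this]

section G

variable {p : ℝ[X]} {c : ℝ}

lemma g_hasDerivAt (p : ℝ[X]) (c : ℝ) (t : ℝ) :
    HasDerivAt (fun t : ℝ => Real.exp (t / c) * p.eval t)
      (Real.exp (t / c) * (1 / c * p.eval t + (derivative p).eval t)) t := by
  have h1 : HasDerivAt (fun t : ℝ => t / c) (1 / c) t := by
    simpa [div_eq_mul_inv, one_mul] using (hasDerivAt_id t).div_const c
  have h2 := h1.exp
  have h3 := h2.mul (Polynomial.hasDerivAt p t)
  exact h3.congr_deriv (by ring)

lemma g_continuous (p : ℝ[X]) (c : ℝ) :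
    Continuous (fun t : ℝ => Real.exp (t / c) * p.eval t) :=
  ((Real.continuous_exp.comp (continuous_id.div_const c)).mul p.continuous_aeval)

lemma crit_root (hc : c ≠ 0) {z : ℝ}
    (hz : deriv (fun t : ℝ => Real.exp (t / c) * p.eval t) z = 0) :
    (p + C c * derivative p).IsRoot z := by
  rw [(g_hasDerivAt p c z).deriv] at hz
  have h1 : 1 / c * p.eval z + (derivative p).eval z = 0 :=
    by
      rcases mul_eq_zero.1 hz with h | h
      · exact absurd h (Real.exp_ne_zero _)
      · exact h
  show (p + C c * derivative p).eval z = 0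
  rw [Polynomial.eval_add, Polynomial.eval_mul, Polynomial.eval_C]
  field_simp at h1
  linarith

lemma rolle_root (hc : c ≠ 0) {x y : ℝ} (hx : p.IsRoot x) (hy : p.IsRoot y) (hxy : x < y) :
    ∃ z, x < z ∧ z < y ∧ (p + C c * derivative p).IsRoot z := by
  obtain ⟨z, hz1, hz2⟩ := exists_deriv_eq_zero hxy (g_continuous p c).continuousOn
    (by simp [hx.eq_zero, hy.eq_zero])
  exact ⟨z, hz1.1, hz1.2, crit_root hc hz2⟩

end G

lemma sum_count_le_card (F : Finset ℝ) (M : Multiset ℝ) :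
    ∑ a ∈ F, M.count a ≤ Multiset.card M := by
  have h1 : ∑ a ∈ F, M.count a = ∑ a ∈ F ∩ M.toFinset, M.count a := by
    refine (Finset.sum_subset Finset.inter_subset_left fun x hx hx2 => ?_).symm
    rw [Multiset.count_eq_zero]
    intro hmem
    exact hx2 (Finset.mem_inter.2 ⟨hx, Multiset.mem_toFinset.2 hmem⟩)
  rw [h1, ← Multiset.toFinset_sum_count_eq M]
  exact Finset.sum_le_sum_of_subset Finset.inter_subset_right

lemma card_roots_le_count {p h : ℝ[X]} (hp0 : p ≠ 0) (hh0 : h ≠ 0)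
    (hmult : ∀ x : ℝ, p.rootMultiplicity x - 1 ≤ h.rootMultiplicity x)
    (hrolle : ∀ x y : ℝ, p.IsRoot x → p.IsRoot y → x < y → ∃ z, x < z ∧ z < y ∧ h.IsRoot z)
    (zext : ℝ) (hzext : h.IsRoot zext)
    (hsep : (∀ x ∈ p.roots.toFinset, zext < x) ∨ (∀ x ∈ p.roots.toFinset, x < zext)) :
    Multiset.card p.roots ≤ Multiset.card h.roots := by
  classical
  set T := p.roots.toFinset with hT
  set t := h.roots.toFinset with ht
  have hzt : zext ∈ t := Multiset.mem_toFinset.2 ((Polynomial.mem_roots hh0).2 hzext)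
  -- marker
  set w : ℝ := if (∀ x ∈ T, zext < x) then zext - 1 else zext + 1 with hw
  have hwT : w ∉ T := by
    intro hmem
    rcases hsep with hs | hs
    · rw [hw, if_pos hs] at hmem
      have := hs _ hmem
      linarith
    · by_cases hall : ∀ x ∈ T, zext < x
      · rw [hw, if_pos hall] at hmem
        have := hall _ hmem
        linarith
      · rw [hw, if_neg hall] at hmem
        have := hs _ hmem
        linarith
  have hmemroot : ∀ x ∈ T, p.IsRoot x := fun x hx =>
    (Polynomial.mem_roots hp0).1 (Multiset.mem_toFinset.1 hx)
  -- Step A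
  have hA : T.card ≤ (t \ T).card := by
    have hinter := Finset.card_le_diff_of_interleaved (s := insert w T) (t := t) ?cond
    case cond =>
      intro x hx y hy hxy _
      rcases Finset.mem_insert.1 hx with rfl | hxT
      · -- x = w
        rcases Finset.mem_insert.1 hy with rfl | hyT
        · exact absurd hxy (lt_irrefl _)
        · -- y ∈ T, w < y; must be in left-separation case
          rcases hsep with hs | hs
          · refine ⟨zext, hzt, ?_, hs _ hyT⟩
            have : w = zext - 1 := by rw [hw, if_pos hs]
            rw [this]; linarith
          · -- right separation: then w = ?; show contradiction or still produce
            by_cases hall : ∀ x ∈ T, zext < x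
            · refine ⟨zext, hzt, ?_, hall _ hyT⟩
              have : w = zext - 1 := by rw [hw, if_pos hall]
              rw [this]; linarith
            · exfalso
              have hwv : w = zext + 1 := by rw [hw, if_neg hall]
              have := hs _ hyT
              rw [hwv] at hxy
              linarith
      · rcases Finset.mem_insert.1 hy with rfl | hyT
        · -- y = w, x ∈ T: must be right-separation
          rcases hsep with hs | hs
          · exfalso
            by_cases hall : ∀ x ∈ T, zext < x
            · have hwv : w = zext - 1 := by rw [hw, if_pos hall]
              have := hall _ hxT
              rw [hwv] at hxy
              linarith
            · exact hall fun x hx => hs x hx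
          · refine ⟨zext, hzt, hs _ hxT, ?_⟩
            by_cases hall : ∀ x ∈ T, zext < x
            · exfalso
              have := hall _ hxT
              have := hs _ hxT
              linarith
            · have hwv : w = zext + 1 := by rw [hw, if_neg hall]
              rw [hwv]; linarith
        · obtain ⟨z, hz1, hz2, hz3⟩ := hrolle x y (hmemroot _ hxT) (hmemroot _ hyT) hxy
          exact ⟨z, Multiset.mem_toFinset.2 ((Polynomial.mem_roots hh0).2 hz3), hz1, hz2⟩
    rw [Finset.card_insert_of_notMem hwT, Finset.sdiff_insert] at hinter
    have := Finset.card_erase_le (s := t \ T) (a := w)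
    omega
  -- Step B: counting
  have h1 : Multiset.card p.roots = ∑ x ∈ T, p.roots.count x :=
    (Multiset.toFinset_sum_count_eq _).symm
  have h2 : ∀ x ∈ T, p.roots.count x ≤ h.roots.count x + 1 := by
    intro x _
    rw [Polynomial.count_roots, Polynomial.count_roots]
    have := hmult x
    omega
  have h3 : ∑ x ∈ T, p.roots.count x ≤ (∑ x ∈ T, h.roots.count x) + T.card := by
    calc ∑ x ∈ T, p.roots.count x ≤ ∑ x ∈ T, (h.roots.count x + 1) := Finset.sum_le_sum h2
    _ = (∑ x ∈ T, h.roots.count x) + T.card := by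
        rw [Finset.sum_add_distrib, Finset.card_eq_sum_ones]
  have h5 : (t \ T).card ≤ ∑ x ∈ t \ T, h.roots.count x := by
    rw [Finset.card_eq_sum_ones]
    refine Finset.sum_le_sum fun x hx => ?_
    exact Multiset.count_pos.2 (Multiset.mem_toFinset.1 (Finset.mem_sdiff.1 hx).1)
  have h6 : (∑ x ∈ T, h.roots.count x) + ∑ x ∈ t \ T, h.roots.count x
      = ∑ x ∈ T ∪ (t \ T), h.roots.count x := by
    rw [Finset.sum_union Finset.disjoint_sdiff]
  have h7 : ∑ x ∈ T ∪ (t \ T), h.roots.count x ≤ Multiset.card h.roots :=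
    sum_count_le_card _ _
  omega







lemma RR_add_C_mul_derivative {p : ℝ[X]} (hp : RR p) (c : ℝ) :
    RR (p + C c * derivative p) := by
  classical
  by_cases hp0 : p = 0
  · subst hp0; simp [RR]
  by_cases hc : c = 0
  · subst hc; simpa [RR] using hp
  by_cases hd0 : p.natDegree = 0
  · obtain ⟨a, rfl⟩ := Polynomial.natDegree_eq_zero.1 hd0
    simpa [RR] using hp
  have hd1 : 1 ≤ p.natDegree := Nat.one_le_iff_ne_zero.2 hd0
  set h := p + C c * derivative p with hh
  have hdlt : (C c * derivative p).natDegree < p.natDegree :=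
    lt_of_le_of_lt (Polynomial.natDegree_C_mul_le _ _) (Polynomial.natDegree_derivative_lt hd0)
  have hhdeg : h.natDegree = p.natDegree := Polynomial.natDegree_add_eq_left_of_natDegree_lt hdlt
  have hh0 : h ≠ 0 := fun h0 => by rw [h0, Polynomial.natDegree_zero] at hhdeg; omega
  -- multiplicity hypothesis
  have hmult : ∀ x : ℝ, p.rootMultiplicity x - 1 ≤ h.rootMultiplicity x := by
    intro x
    rcases Nat.eq_zero_or_pos (p.rootMultiplicity x) with h0 | hpos
    · omega
    have hdvd1 : (X - C x) ^ (p.rootMultiplicity x - 1) ∣ p :=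
      dvd_trans (pow_dvd_pow _ (Nat.sub_le _ _)) (Polynomial.pow_rootMultiplicity_dvd p x)
    have hdvd2 : (X - C x) ^ (p.rootMultiplicity x - 1) ∣ derivative p :=
      dvd_trans (pow_dvd_pow _ (Polynomial.rootMultiplicity_sub_one_le_derivative_rootMultiplicity p x))
        (Polynomial.pow_rootMultiplicity_dvd (derivative p) x)
    have hdvd : (X - C x) ^ (p.rootMultiplicity x - 1) ∣ h :=
      dvd_add hdvd1 (hdvd2.mul_left _)
    exact (Polynomial.le_rootMultiplicity_iff hh0).2 hdvd
  -- roots of p nonempty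
  have hcard : Multiset.card p.roots = p.natDegree := hp
  have hTne : p.roots.toFinset.Nonempty := by
    rw [Multiset.toFinset_nonempty]
    intro hrn
    rw [hrn] at hcard
    simp at hcard
    omega
  have hroot_of_mem : ∀ x ∈ p.roots.toFinset, p.IsRoot x := fun x hx =>
    (Polynomial.mem_roots hp0).1 (Multiset.mem_toFinset.1 hx)
  -- extra root
  have hextra : ∃ zext, h.IsRoot zext ∧
      ((∀ x ∈ p.roots.toFinset, zext < x) ∨ (∀ x ∈ p.roots.toFinset, x < zext)) := by
    rcases (Ne.lt_or_gt hc).symm with hcpos | hcneg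
    · -- c > 0 : root below min
      set b := p.roots.toFinset.min' hTne with hb
      have hbr : p.IsRoot b := hroot_of_mem _ (Finset.min'_mem _ _)
      have hgb : Real.exp (b / c) * p.eval b = 0 := by rw [hbr.eq_zero, mul_zero]
      have hnr : p.eval (b - 1) ≠ 0 := by
        intro he
        have : b - 1 ∈ p.roots.toFinset :=
          Multiset.mem_toFinset.2 ((Polynomial.mem_roots hp0).2 he)
        have := p.roots.toFinset.min'_le _ this
        rw [← hb] at this
        linarith
      have hgt₀ : Real.exp ((b - 1) / c) * p.eval (b - 1) ≠ 0 :=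
        mul_ne_zero (Real.exp_ne_zero _) hnr
      obtain ⟨z, hz1, hz2⟩ := exists_deriv_zero_of_tendsto_atBot (g_continuous p c) hgb
        (tendsto_exp_mul_poly_atBot hcpos p) (by linarith : b - 1 < b) hgt₀
      exact ⟨z, crit_root hc hz2, Or.inl fun x hx =>
        lt_of_lt_of_le hz1 (p.roots.toFinset.min'_le _ hx)⟩
    · -- c < 0: root above max
      set b := p.roots.toFinset.max' hTne with hb
      have hbr : p.IsRoot b := hroot_of_mem _ (Finset.max'_mem _ _)
      have hgb : Real.exp (b / c) * p.eval b = 0 := by rw [hbr.eq_zero, mul_zero]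
      have hnr : p.eval (b + 1) ≠ 0 := by
        intro he
        have : b + 1 ∈ p.roots.toFinset :=
          Multiset.mem_toFinset.2 ((Polynomial.mem_roots hp0).2 he)
        have := p.roots.toFinset.le_max' _ this
        rw [← hb] at this
        linarith
      have hgt₀ : Real.exp ((b + 1) / c) * p.eval (b + 1) ≠ 0 :=
        mul_ne_zero (Real.exp_ne_zero _) hnr
      obtain ⟨z, hz1, hz2⟩ := exists_deriv_zero_of_tendsto_atTop (g_continuous p c) hgb
        (tendsto_exp_mul_poly_atTop hcneg p) (by linarith : b < b + 1) hgt₀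
      exact ⟨z, crit_root hc hz2, Or.inr fun x hx =>
        lt_of_le_of_lt (p.roots.toFinset.le_max' _ hx) hz1⟩
  obtain ⟨zext, hzr, hzsep⟩ := hextra
  have hcount := card_roots_le_count hp0 hh0 hmult
    (fun x y hx hy hxy => rolle_root hc hx hy hxy) zext hzr hzsep
  have hle : Multiset.card h.roots ≤ h.natDegree := Polynomial.card_roots' h
  rw [RR, hhdeg]
  omega


/-! ### Real-rootedness of SigP -/

lemma SigP_empty (k : ℕ) : SigP μ (∅ : Finset (Fin n)) k = C (1 / (Nat.factorial k : ℝ)) * X ^ k := by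
  apply Polynomial.ext
  intro j
  rw [SigP_coeff, Polynomial.coeff_C_mul, Polynomial.coeff_X_pow]
  rcases lt_trichotomy j k with h | rfl | h
  · rw [if_pos h.le, if_neg h.ne]
    obtain ⟨m, hm⟩ : ∃ m, k - j = m + 1 := ⟨k - j - 1, by omega⟩
    rw [hm, Es_empty_succ, zero_div, mul_zero]
  · rw [if_pos le_rfl, if_pos rfl, Nat.sub_self, Es_zero, mul_one]
  · rw [if_neg (by omega), if_neg (by omega), mul_zero]

lemma RR_SigP (s : Finset (Fin n)) (k : ℕ) : RR (SigP μ s k) := by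
  classical
  induction s using Finset.induction_on with
  | empty =>
    have ha : (1 / (Nat.factorial k : ℝ)) ≠ 0 :=
      one_div_ne_zero (Nat.cast_ne_zero.2 (Nat.factorial_ne_zero k))
    rw [RR, SigP_empty, Polynomial.roots_C_mul _ ha, Polynomial.roots_pow, Polynomial.roots_X,
      Polynomial.natDegree_C_mul ha, Polynomial.natDegree_X_pow]
    simp
  | @insert i s _ ih =>
    have hi : i ∉ s := by assumption
    match k with
    | 0 => rw [RR, SigP_zero]; simp
    | k + 1 =>
      rw [SigP_insert μ hi, ← SigP_derivative μ s k]
      exact RR_add_C_mul_derivative (ih) (μ i)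

lemma newton (s : Finset (Fin n)) (k : ℕ) (x : ℝ) :
    (SigP μ s (k + 2)).eval x * (SigP μ s k).eval x ≤ (SigP μ s (k + 1)).eval x ^ 2 := by
  have h := laguerre (RR_SigP μ s (k + 2)) x
  rwa [SigP_derivative, SigP_derivative] at h

/-! ### The cone lemma -/

lemma cone_step_arith {A0 A1 A2 x : ℝ} (hA0 : 0 < A0) (hB1 : 0 < A1 + x * A0)
    (hB2 : 0 < A2 + x * A1) (hN : A2 * A0 ≤ A1 ^ 2) : 0 < A1 := by
  rcases le_or_gt x 0 with hx | hx
  · nlinarith [mul_nonpos_of_nonpos_of_nonneg hx hA0.le]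
  · by_contra hcon
    push_neg at hcon
    have h1 : (0:ℝ) ≤ -A1 := neg_nonneg.2 hcon
    have h4 := mul_lt_mul'' (show -A1 < x * A0 by linarith) (show x * -A1 < A2 by linarith)
      h1 (mul_nonneg hx.le h1)
    have h5 : x * (A2 * A0) ≤ x * A1 ^ 2 := mul_le_mul_of_nonneg_left hN hx.le
    nlinarith [h4, h5]

lemma SigP_eval_erase {s : Finset (Fin n)} {i : Fin n} (hi : i ∈ s) (m : ℕ) (x : ℝ) :
    (SigP μ s (m + 1)).eval x
      = (SigP μ (s.erase i) (m + 1)).eval x + μ i * (SigP μ (s.erase i) m).eval x := by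
  conv_lhs => rw [← Finset.insert_erase hi]
  rw [SigP_insert μ (Finset.notMem_erase i s), Polynomial.eval_add, Polynomial.eval_mul,
    Polynomial.eval_C]

lemma cone_erase (μ₀ : ℝ) : ∀ (k : ℕ) (s : Finset (Fin n)) (i : Fin n), i ∈ s →
    (∀ j, 1 ≤ j → j ≤ k + 1 → 0 < (-1 : ℝ) ^ j * (SigP μ s j).eval μ₀) →
    ∀ j, j ≤ k → 0 < (-1 : ℝ) ^ j * (SigP μ (s.erase i) j).eval μ₀ := by
  intro k
  induction k with
  | zero =>
    intro s i hi _ j hj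
    have : j = 0 := by omega
    subst this
    rw [SigP_zero]
    simp
  | succ k ih =>
    intro s i hi hyp j hj
    have hA : ∀ j', j' ≤ k → 0 < (-1 : ℝ) ^ j' * (SigP μ (s.erase i) j').eval μ₀ :=
      ih s i hi (fun j h1 h2 => hyp j h1 (by omega))
    rcases Nat.lt_or_ge j (k + 1) with h | h
    · exact hA j (by omega)
    have hjk : j = k + 1 := by omega
    subst hjk
    set c : ℝ := (-1 : ℝ) ^ k with hc
    have hc2 : c ^ 2 = 1 := by
      rw [hc, ← pow_mul, mul_comm, pow_mul]
      norm_num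
    set e0 : ℝ := (SigP μ (s.erase i) k).eval μ₀
    set e1 : ℝ := (SigP μ (s.erase i) (k + 1)).eval μ₀
    set e2 : ℝ := (SigP μ (s.erase i) (k + 2)).eval μ₀
    have hA0 : 0 < c * e0 := hA k le_rfl
    have hB1' := hyp (k + 1) (by omega) (by omega)
    have hB2' := hyp (k + 2) (by omega) (by omega)
    rw [SigP_eval_erase μ hi k μ₀] at hB1'
    rw [SigP_eval_erase μ hi (k + 1) μ₀] at hB2'
    have hB1 : 0 < (-c) * e1 + (-μ i) * (c * e0) := by
      rw [pow_succ] at hB1'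
      calc (0:ℝ) < (-1) ^ k * -1 * ((SigP μ (s.erase i) (k+1)).eval μ₀
          + μ i * (SigP μ (s.erase i) k).eval μ₀) := hB1'
      _ = (-c) * e1 + (-μ i) * (c * e0) := by rw [hc]; ring
    have hB2 : 0 < (c) * e2 + (-μ i) * ((-c) * e1) := by
      rw [pow_succ, pow_succ] at hB2'
      calc (0:ℝ) < (-1) ^ k * -1 * -1 * ((SigP μ (s.erase i) (k+2)).eval μ₀
          + μ i * (SigP μ (s.erase i) (k+1)).eval μ₀) := hB2'
      _ = (c) * e2 + (-μ i) * ((-c) * e1) := by rw [hc]; ring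
    have hNe := newton μ (s.erase i) k μ₀
    have hN : (c * e2) * (c * e0) ≤ ((-c) * e1) ^ 2 := by
      calc (c * e2) * (c * e0) = c ^ 2 * (e2 * e0) := by ring
      _ = e2 * e0 := by rw [hc2]; ring
      _ ≤ e1 ^ 2 := hNe
      _ = ((-c) * e1) ^ 2 := by rw [neg_mul, neg_sq, mul_pow, hc2, one_mul]
    have := cone_step_arith hA0 hB1 hB2 hN
    calc (0:ℝ) < (-c) * e1 := this
    _ = (-1 : ℝ) ^ (k + 1) * e1 := by rw [hc, pow_succ]; ring

/-! ### The main identity -/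

lemma main_identity : ∀ (s : Finset (Fin n)) (k : ℕ), 1 ≤ k → ∀ x : ℝ,
    (SigP μ s 1).eval x * (SigP μ s k).eval x - ((k : ℝ) + 1) * (SigP μ s (k + 1)).eval x
      = ∑ i ∈ s, (μ i) ^ 2 * (SigP μ (s.erase i) (k - 1)).eval x := by
  classical
  intro s
  induction s using Finset.induction_on with
  | empty =>
    intro k hk x
    rw [Finset.sum_empty, SigP_empty, SigP_empty, SigP_empty]
    simp only [Polynomial.eval_mul, Polynomial.eval_C, Polynomial.eval_pow, Polynomial.eval_X]
    have h1 : (Nat.factorial (k + 1) : ℝ) = (k + 1) * Nat.factorial k := by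
      rw [Nat.factorial_succ]; push_cast; ring
    rw [h1, Nat.factorial_one]
    have h2 : (Nat.factorial k : ℝ) ≠ 0 := Nat.cast_ne_zero.2 (Nat.factorial_ne_zero k)
    have h3 : (k : ℝ) + 1 ≠ 0 := by positivity
    field_simp
    ring
  | @insert i s _ ihs =>
    have hi : i ∉ s := by assumption
    intro k hk x
    rw [Finset.sum_insert hi, Finset.erase_insert hi]
    have herase : ∀ l ∈ s, (insert i s).erase l = insert i (s.erase l) := by
      intro l hl
      apply Finset.erase_insert_of_ne
      exact fun he => hi (by rw [he]; exact hl)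
    have h1 : (SigP μ (insert i s) 1).eval x = (SigP μ s 1).eval x + μ i := by
      have := SigP_insert μ hi 0
      rw [this, SigP_zero]
      simp
    match k, hk with
    | 1, _ =>
      have h0 : ∀ t : Finset (Fin n), (SigP μ t (1 - 1)).eval x = 1 := by
        intro t
        show (SigP μ t 0).eval x = 1
        rw [SigP_zero, Polynomial.eval_one]
      have hu : (SigP μ (insert i s) 2).eval x
          = (SigP μ s 2).eval x + μ i * (SigP μ s 1).eval x := by
        rw [SigP_insert μ hi 1]
        simp [Polynomial.eval_add, Polynomial.eval_mul, Polynomial.eval_C]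
      have ih1 := ihs 1 le_rfl x
      simp only [h0] at ih1 ⊢
      rw [h1, hu]
      push_cast at ih1 ⊢
      linear_combination ih1
    | (m + 2), _ =>
      rw [show m + 2 - 1 = m + 1 by omega]
      have hu1 : (SigP μ (insert i s) (m + 2)).eval x
          = (SigP μ s (m + 2)).eval x + μ i * (SigP μ s (m + 1)).eval x := by
        rw [SigP_insert μ hi (m + 1)]
        simp [Polynomial.eval_add, Polynomial.eval_mul, Polynomial.eval_C]
      have hu2 : (SigP μ (insert i s) (m + 3)).eval x
          = (SigP μ s (m + 3)).eval x + μ i * (SigP μ s (m + 2)).eval x := by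
        rw [SigP_insert μ hi (m + 2)]
        simp [Polynomial.eval_add, Polynomial.eval_mul, Polynomial.eval_C]
      have hsum : ∑ l ∈ s, (μ l) ^ 2 * (SigP μ ((insert i s).erase l) (m + 1)).eval x
          = (∑ l ∈ s, (μ l) ^ 2 * (SigP μ (s.erase l) (m + 1)).eval x)
            + μ i * ∑ l ∈ s, (μ l) ^ 2 * (SigP μ (s.erase l) m).eval x := by
        rw [Finset.mul_sum, ← Finset.sum_add_distrib]
        refine Finset.sum_congr rfl fun l hl => ?_
        rw [herase l hl]
        have hins : i ∉ s.erase l := fun hmem => hi (Finset.mem_of_mem_erase hmem)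
        rw [SigP_insert μ hins m]
        simp only [Polynomial.eval_add, Polynomial.eval_mul, Polynomial.eval_C]
        ring
      have ih1 := ihs (m + 2) (by omega) x
      have ih2 := ihs (m + 1) (by omega) x
      rw [show m + 2 - 1 = m + 1 by omega] at ih1
      rw [show m + 1 - 1 = m by omega] at ih2
      rw [h1, hu1, hu2, hsum]
      push_cast at ih1 ih2 ⊢
      linear_combination ih1 + μ i * ih2

end WNCI

open WNCI Polynomial in
/-- If `(μ₀;μ)` lies in the negative weighted elliptic `k`-cone, then
`(-1)^{k+1} (k+1) σ_{k+1}^∞(μ₀;μ) ≤ (-1)^{k+1} σ_1^∞(μ₀;μ) σ_k^∞(μ₀;μ)`,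
with equality if and only if `μ = 0`. -/
theorem weighted_newton_cone_inequality {n : ℕ} (k : ℕ) (hk : 1 ≤ k) (μ₀ : ℝ) (μ : Fin n → ℝ)
    (hcone : ∀ j ∈ Finset.Icc 1 k, (-1 : ℝ) ^ j * sigmaInf μ₀ μ j > 0) :
    (-1 : ℝ) ^ (k + 1) * ((k : ℝ) + 1) * sigmaInf μ₀ μ (k + 1)
        ≤ (-1 : ℝ) ^ (k + 1) * (sigmaInf μ₀ μ 1 * sigmaInf μ₀ μ k)
      ∧ ((-1 : ℝ) ^ (k + 1) * ((k : ℝ) + 1) * sigmaInf μ₀ μ (k + 1)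
          = (-1 : ℝ) ^ (k + 1) * (sigmaInf μ₀ μ 1 * sigmaInf μ₀ μ k) ↔ μ = 0) := by
  classical
  have hev : ∀ j, sigmaInf μ₀ μ j = (SigP μ Finset.univ j).eval μ₀ :=
    fun j => sigmaInf_eq_eval μ μ₀ j
  have hyp : ∀ j, 1 ≤ j → j ≤ (k - 1) + 1 →
      0 < (-1 : ℝ) ^ j * (SigP μ Finset.univ j).eval μ₀ := by
    intro j h1 h2
    have := hcone j (Finset.mem_Icc.2 ⟨h1, by omega⟩)
    rwa [hev j] at this
  have hpos : ∀ i : Fin n,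
      0 < (-1 : ℝ) ^ (k - 1) * (SigP μ (Finset.univ.erase i) (k - 1)).eval μ₀ :=
    fun i => cone_erase μ μ₀ (k - 1) Finset.univ i (Finset.mem_univ i) hyp (k - 1) le_rfl
  have hid := main_identity μ Finset.univ k hk μ₀
  have hsgn : ((-1 : ℝ)) ^ (k + 1) = (-1 : ℝ) ^ (k - 1) := by
    obtain ⟨m, rfl⟩ : ∃ m, k = m + 1 := ⟨k - 1, by omega⟩
    rw [show m + 1 - 1 = m by omega, pow_succ, pow_succ]
    ring
  set S := ∑ i : Fin n, (μ i) ^ 2 *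
    ((-1 : ℝ) ^ (k - 1) * (SigP μ (Finset.univ.erase i) (k - 1)).eval μ₀) with hS
  have hid' : (-1 : ℝ) ^ (k - 1) * ((SigP μ Finset.univ 1).eval μ₀ *
        (SigP μ Finset.univ k).eval μ₀
      - ((k : ℝ) + 1) * (SigP μ Finset.univ (k + 1)).eval μ₀) = S := by
    rw [hid, hS, Finset.mul_sum]
    exact Finset.sum_congr rfl fun i _ => by ring
  have hterm : ∀ i : Fin n, 0 ≤ (μ i) ^ 2 *
      ((-1 : ℝ) ^ (k - 1) * (SigP μ (Finset.univ.erase i) (k - 1)).eval μ₀) :=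
    fun i => mul_nonneg (sq_nonneg _) (hpos i).le
  have hSnn : 0 ≤ S := Finset.sum_nonneg fun i _ => hterm i
  have h2 : 0 ≤ (-1 : ℝ) ^ (k - 1) * ((SigP μ Finset.univ 1).eval μ₀ *
        (SigP μ Finset.univ k).eval μ₀
      - ((k : ℝ) + 1) * (SigP μ Finset.univ (k + 1)).eval μ₀) := by
    rw [hid']; exact hSnn
  constructor
  · rw [hev 1, hev k, hev (k + 1), hsgn]
    nlinarith [h2]
  constructor
  · intro heq
    rw [hev 1, hev k, hev (k + 1), hsgn] at heq
    have hS0 : S = 0 := by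
      rw [← hid']
      linear_combination -heq
    have hz := (Finset.sum_eq_zero_iff_of_nonneg fun i _ => hterm i).1 hS0
    funext i
    have hzi := hz i (Finset.mem_univ i)
    have hne := (hpos i).ne'
    have hsq : (μ i) ^ 2 = 0 := by
      rcases mul_eq_zero.1 hzi with h | h
      · exact h
      · exact absurd h hne
    have := sq_eq_zero_iff.1 hsq
    simpa using this
  · intro h0
    subst h0
    have hS0 : S = 0 := Finset.sum_eq_zero fun i _ => by simp
    rw [hev 1, hev k, hev (k + 1), hsgn]
    have h3 := hid'.trans hS0
    linear_combination -h3
end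

section
/- Let P be a real symmetric n×n matrix and let μ₀ ∈ ℝ. Then for all k ∈ ℕ, trace(T_k^∞(μ₀;P)·P) = (k+1)·σ_{k+1}^∞(μ₀;P) − μ₀·σ_k^∞(μ₀;P). -/
/-- `σ_k^∞(μ₀;P)` for a real symmetric (Hermitian) matrix `P`, defined via the eigenvalues
of `P` (with multiplicity). -/
noncomputable def sigmaInfMat {n : ℕ} (μ₀ : ℝ) {P : Matrix (Fin n) (Fin n) ℝ}
    (hP : P.IsHermitian) (k : ℕ) : ℝ :=
  sigmaInf μ₀ hP.eigenvalues k

/-- The `k`-th weighted Newton transformation `T_k^∞(μ₀;P) = ∑_{j=0}^k (-1)^j σ_{k-j}^∞(μ₀;P) P^j`. -/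
noncomputable def newtonMat {n : ℕ} (μ₀ : ℝ) {P : Matrix (Fin n) (Fin n) ℝ}
    (hP : P.IsHermitian) (k : ℕ) : Matrix (Fin n) (Fin n) ℝ :=
  ∑ j ∈ Finset.range (k + 1), ((-1 : ℝ) ^ j * sigmaInfMat μ₀ hP (k - j)) • P ^ j

open Finset

lemma eval_esymm {n : ℕ} (μ : Fin n → ℝ) (m : ℕ) :
    MvPolynomial.eval μ (MvPolynomial.esymm (Fin n) ℝ m) = esymm μ m := by
  simp [MvPolynomial.esymm, esymm]

lemma eval_psum {n : ℕ} (μ : Fin n → ℝ) (m : ℕ) :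
    MvPolynomial.eval μ (MvPolynomial.psum (Fin n) ℝ m) = ∑ i, μ i ^ m := by
  simp [MvPolynomial.psum]

lemma conj_pow_unitary {n : ℕ} (U : Matrix.unitaryGroup (Fin n) ℝ)
    (D : Matrix (Fin n) (Fin n) ℝ) (j : ℕ) :
    ((U : Matrix (Fin n) (Fin n) ℝ) * D * star (U : Matrix (Fin n) (Fin n) ℝ)) ^ j
      = (U : Matrix (Fin n) (Fin n) ℝ) * D ^ j * star (U : Matrix (Fin n) (Fin n) ℝ) := by
  induction j with
  | zero =>
      simp only [pow_zero, Matrix.mul_one]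
      exact (Matrix.mem_unitaryGroup_iff.mp U.2).symm
  | succ j ih =>
      rw [pow_succ, ih, pow_succ]
      have h1 : star (U : Matrix (Fin n) (Fin n) ℝ) * (U : Matrix (Fin n) (Fin n) ℝ) = 1 :=
        Matrix.mem_unitaryGroup_iff'.mp U.2
      calc (U : Matrix (Fin n) (Fin n) ℝ) * D ^ j * star (U : Matrix (Fin n) (Fin n) ℝ) *
            ((U : Matrix (Fin n) (Fin n) ℝ) * D * star (U : Matrix (Fin n) (Fin n) ℝ))
          = (U : Matrix (Fin n) (Fin n) ℝ) * D ^ j *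
              (star (U : Matrix (Fin n) (Fin n) ℝ) * (U : Matrix (Fin n) (Fin n) ℝ)) * D *
              star (U : Matrix (Fin n) (Fin n) ℝ) := by
            simp only [Matrix.mul_assoc]
        _ = (U : Matrix (Fin n) (Fin n) ℝ) * (D ^ j * D) * star (U : Matrix (Fin n) (Fin n) ℝ) := by
            rw [h1]
            simp only [Matrix.mul_one, Matrix.mul_assoc]

lemma trace_pow_eq {n : ℕ} {P : Matrix (Fin n) (Fin n) ℝ} (hP : P.IsHermitian) (j : ℕ) :
    (P ^ j).trace = ∑ i, hP.eigenvalues i ^ j := by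
  conv_lhs => rw [hP.spectral_theorem, Unitary.conjStarAlgAut_apply]
  rw [conj_pow_unitary, Matrix.trace_mul_cycle,
    Matrix.mem_unitaryGroup_iff'.mp (hP.eigenvectorUnitary).2, Matrix.one_mul]
  simp [Matrix.diagonal_pow, Matrix.trace_diagonal]

/-- Newton's identity over ℝ, in the form we need. -/
lemma newton_real {n : ℕ} (μ : Fin n → ℝ) (m : ℕ) :
    ∑ j ∈ range (m + 1), (-1 : ℝ) ^ j * esymm μ (m - j) * (∑ i, μ i ^ (j + 1))
      = ((m : ℝ) + 1) * esymm μ (m + 1) := by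
  have h := congrArg (MvPolynomial.eval μ) (MvPolynomial.mul_esymm_eq_sum (Fin n) ℝ (m + 1))
  simp only [map_mul, map_sum, map_pow, map_neg, map_one, map_natCast, eval_esymm,
    eval_psum] at h
  -- h : (↑(m+1)) * esymm μ (m+1) = (-1)^(m+2) * ∑ a ∈ filter ..., ...
  -- convert RHS filtered antidiagonal sum to a range sum
  rw [Finset.sum_filter, Finset.Nat.sum_antidiagonal_eq_sum_range_succ_mk] at h
  rw [Finset.sum_range_succ] at h
  simp only [lt_self_iff_false, if_false, add_zero] at h
  have hsimp : ∀ j ∈ range (m + 1),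
      (if j < m + 1 then (-1 : ℝ) ^ j * esymm μ j * ∑ i, μ i ^ (m + 1 - j) else 0)
        = (-1 : ℝ) ^ j * esymm μ j * ∑ i, μ i ^ (m + 1 - j) := by
    intro j hj
    rw [if_pos (mem_range.mp hj)]
  rw [Finset.sum_congr rfl hsimp] at h
  -- reflect our LHS sum
  rw [← Finset.sum_range_reflect]
  have key : ∀ j ∈ range (m + 1),
      (-1 : ℝ) ^ (m + 1 - 1 - j) * esymm μ (m - (m + 1 - 1 - j)) * (∑ i, μ i ^ (m + 1 - 1 - j + 1))
        = (-1 : ℝ) ^ m * ((-1 : ℝ) ^ j * esymm μ j * ∑ i, μ i ^ (m + 1 - j)) := by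
    intro j hj
    have hjm : j ≤ m := Nat.lt_succ_iff.mp (mem_range.mp hj)
    have h1 : m + 1 - 1 - j = m - j := by omega
    have h2 : m - (m - j) = j := by omega
    have h3 : m - j + 1 = m + 1 - j := by omega
    rw [h1, h2, h3]
    have h6 : (-1 : ℝ) ^ (m - j) = (-1 : ℝ) ^ m * (-1 : ℝ) ^ j := by
      rw [← pow_add, show m + j = (m - j) + 2 * j by omega, pow_add, pow_mul]
      norm_num
    rw [h6]
    ring
  push_cast at h
  rw [Finset.sum_congr rfl key, ← Finset.mul_sum, h,
    show (-1 : ℝ) ^ (m + 1 + 1) = (-1) ^ m * (-1) ^ 2 from pow_add (-1 : ℝ) m 2]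
  ring

lemma sum_range_if {m M : ℕ} (h : m ≤ M) (f : ℕ → ℝ) :
    ∑ i ∈ range M, (if i < m then f i else 0) = ∑ i ∈ range m, f i := by
  rw [← Finset.sum_filter]
  congr 1
  ext x
  simp only [mem_filter, mem_range]
  omega

/-- swap a triangular double sum -/
lemma sum_tri {k : ℕ} (f : ℕ → ℕ → ℝ) :
    ∑ j ∈ range (k + 1), ∑ i ∈ range (k + 1 - j), f j i
      = ∑ i ∈ range (k + 1), ∑ j ∈ range (k + 1 - i), f j i := by
  have l : ∀ g : ℕ → ℕ → ℝ, ∑ j ∈ range (k + 1), ∑ i ∈ range (k + 1 - j), g j i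
      = ∑ j ∈ range (k + 1), ∑ i ∈ range (k + 1), (if i < k + 1 - j then g j i else 0) := by
    intro g
    refine Finset.sum_congr rfl fun j hj => ?_
    rw [sum_range_if (by omega)]
  rw [l, l fun i j => f j i]
  rw [Finset.sum_comm]
  refine Finset.sum_congr rfl fun i _ => Finset.sum_congr rfl fun j _ => ?_
  exact if_congr (by omega) rfl rfl

/-- the scalar identity -/
lemma scalar_main {n : ℕ} (μ₀ : ℝ) (μ : Fin n → ℝ) (k : ℕ) :
    ∑ j ∈ range (k + 1), (-1 : ℝ) ^ j * sigmaInf μ₀ μ (k - j) * (∑ i, μ i ^ (j + 1))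
      = ((k : ℝ) + 1) * sigmaInf μ₀ μ (k + 1) - μ₀ * sigmaInf μ₀ μ k := by
  -- expand LHS into double sum
  have lhs_eq : ∑ j ∈ range (k + 1), (-1 : ℝ) ^ j * sigmaInf μ₀ μ (k - j) * (∑ i, μ i ^ (j + 1))
      = ∑ j ∈ range (k + 1), ∑ i ∈ range (k + 1 - j),
          μ₀ ^ i / (Nat.factorial i : ℝ) *
            ((-1 : ℝ) ^ j * esymm μ (k - i - j) * (∑ l, μ l ^ (j + 1))) := by
    refine Finset.sum_congr rfl fun j hj => ?_
    have hjk : j ≤ k := by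
      have := mem_range.mp hj
      omega
    rw [sigmaInf, show k - j + 1 = k + 1 - j by omega, mul_comm ((-1 : ℝ) ^ j), mul_assoc,
      Finset.sum_mul]
    refine Finset.sum_congr rfl fun i hi => ?_
    rw [show k - j - i = k - i - j by omega]
    ring
  rw [lhs_eq, sum_tri]
  have inner_eq : ∀ i ∈ range (k + 1),
      ∑ j ∈ range (k + 1 - i),
          μ₀ ^ i / (Nat.factorial i : ℝ) *
            ((-1 : ℝ) ^ j * esymm μ (k - i - j) * (∑ l, μ l ^ (j + 1)))
        = μ₀ ^ i / (Nat.factorial i : ℝ) * ((((k - i : ℕ) : ℝ) + 1) * esymm μ (k - i + 1)) := by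
    intro i hi
    have hik : i ≤ k := by
      have := mem_range.mp hi
      omega
    rw [← Finset.mul_sum, show k + 1 - i = (k - i) + 1 by omega, newton_real μ (k - i)]
  rw [Finset.sum_congr rfl inner_eq]
  -- now handle RHS
  have hmu : μ₀ * sigmaInf μ₀ μ k
      = ∑ i ∈ range (k + 2), (i : ℝ) * (μ₀ ^ i / (Nat.factorial i : ℝ)) * esymm μ (k + 1 - i) := by
    rw [Finset.sum_range_succ' (fun i => (i : ℝ) * (μ₀ ^ i / (Nat.factorial i : ℝ))
      * esymm μ (k + 1 - i)) (k + 1)]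
    simp only [Nat.cast_zero, zero_mul, add_zero]
    rw [sigmaInf, Finset.mul_sum]
    refine Finset.sum_congr rfl fun i hi => ?_
    have : (Nat.factorial (i + 1) : ℝ) = (i + 1) * Nat.factorial i := by
      rw [Nat.factorial_succ]
      push_cast
      ring
    rw [show k + 1 - (i + 1) = k - i by omega, this]
    have h0 : (Nat.factorial i : ℝ) ≠ 0 := Nat.cast_ne_zero.mpr (Nat.factorial_ne_zero i)
    have h1 : ((i : ℝ) + 1) ≠ 0 := by positivity
    push_cast
    field_simp
    ring
  have hk1 : ((k : ℝ) + 1) * sigmaInf μ₀ μ (k + 1)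
      = ∑ i ∈ range (k + 2), ((k : ℝ) + 1) * (μ₀ ^ i / (Nat.factorial i : ℝ))
          * esymm μ (k + 1 - i) := by
    rw [sigmaInf, Finset.mul_sum]
    refine Finset.sum_congr rfl fun i hi => ?_
    ring
  rw [hk1, hmu, ← Finset.sum_sub_distrib]
  rw [Finset.sum_range_succ (fun i => ((k : ℝ) + 1) * (μ₀ ^ i / (Nat.factorial i : ℝ))
    * esymm μ (k + 1 - i) - (i : ℝ) * (μ₀ ^ i / (Nat.factorial i : ℝ)) * esymm μ (k + 1 - i))]
  simp only [Nat.cast_add, Nat.cast_one]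
  rw [show ((k : ℝ) + 1) * (μ₀ ^ (k + 1) / (Nat.factorial (k + 1) : ℝ)) * esymm μ (k + 1 - (k + 1))
      - ((k : ℝ) + 1) * (μ₀ ^ (k + 1) / (Nat.factorial (k + 1) : ℝ)) * esymm μ (k + 1 - (k + 1))
      = 0 by ring, add_zero]
  refine Finset.sum_congr rfl fun i hi => ?_
  have hik : i ≤ k := by
    have := mem_range.mp hi
    omega
  have hc : ((k - i : ℕ) : ℝ) = (k : ℝ) - i := by
    push_cast [Nat.cast_sub hik]
    ring
  rw [show k - i + 1 = k + 1 - i by omega, hc]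
  ring

/-- `trace(T_k^∞(μ₀;P) · P) = (k+1) σ_{k+1}^∞(μ₀;P) - μ₀ σ_k^∞(μ₀;P)`. -/
theorem trace_newtonMat_mul {n : ℕ} (μ₀ : ℝ) (P : Matrix (Fin n) (Fin n) ℝ)
    (hP : P.IsHermitian) (k : ℕ) :
    (newtonMat μ₀ hP k * P).trace
      = ((k : ℝ) + 1) * sigmaInfMat μ₀ hP (k + 1) - μ₀ * sigmaInfMat μ₀ hP k := by
  have step : (newtonMat μ₀ hP k * P).trace
      = ∑ j ∈ range (k + 1), (-1 : ℝ) ^ j * sigmaInf μ₀ hP.eigenvalues (k - j)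
          * (∑ i, hP.eigenvalues i ^ (j + 1)) := by
    rw [newtonMat, Finset.sum_mul]
    simp only [smul_mul_assoc, ← pow_succ, Matrix.trace_sum, Matrix.trace_smul, smul_eq_mul,
      trace_pow_eq hP]
    refine Finset.sum_congr rfl fun j hj => ?_
    rw [sigmaInfMat, mul_assoc]
  rw [step, scalar_main, sigmaInfMat, sigmaInfMat]
end
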